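/- arXiv:1406.0199 — 5 statements merged into one kernel-verified Lean document; each statement's English description precedes it below -/
import Mathlib

section
/- Let $\alpha \in \{2, 3, 4\}$ and let $R$ be a commutative ring with unity such that $2$ (if $\alpha = 2$), $3!$ (if $\alpha = 3$), or $5!$ (if $\alpha = 4$) is not a zero-divisor in $R$. Let $\tilde{R} = R[a_{1,1}, a_{1,2}, a_{2,1}, a_{2,2}]$ and let $A = [a_{i,j}] \in M_2(\tilde{R})$ be the generic $2 \times 2$ matrix. If $X = [x_{i,j}] \in M_2(\tilde{R})$ satisfies $AX - XA = X^{\alpha}$, then $AX - XA = 0$, $X^{\alpha} = 0$, and for every pair $(i,j)$ one has $x_{i,j}^{2\alpha - 1} = 0$. -/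
open MvPolynomial

section Helpers

variable {R : Type*} [CommRing R]

/-- A polynomial `X i ^ k + g`, where every monomial of `g` has `i`-degree `< k`,
is a non-zero-divisor. -/
lemma regular_X_pow_add {σ : Type*} [DecidableEq σ] (i : σ) (k : ℕ)
    (g : MvPolynomial σ R) (hg : ∀ m ∈ g.support, m i < k) :
    (X i ^ k + g : MvPolynomial σ R) ∈ nonZeroDivisors (MvPolynomial σ R) := by
  rw [mem_nonZeroDivisors_iff_right]
  intro f hf
  by_contra hne
  have hsupp : f.support.Nonempty := by
    rwa [Finset.nonempty_iff_ne_empty, ne_eq, MvPolynomial.support_eq_empty]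
  obtain ⟨m₀, hm₀, hmax⟩ := Finset.exists_mem_eq_sup f.support hsupp (fun m => m i)
  have hc := congrArg (coeff (m₀ + Finsupp.single i k)) hf
  rw [mul_add, coeff_add, coeff_zero] at hc
  have h1 : coeff (m₀ + Finsupp.single i k) (f * X i ^ k) = coeff m₀ f := by
    rw [X_pow_eq_monomial, coeff_mul_monomial, mul_one]
  have h2 : coeff (m₀ + Finsupp.single i k) (f * g) = 0 := by
    rw [coeff_mul]
    apply Finset.sum_eq_zero
    intro uv huv
    rw [Finset.HasAntidiagonal.mem_antidiagonal] at huv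
    by_cases hv : coeff uv.2 g = 0
    · rw [hv, mul_zero]
    · have hvs : uv.2 ∈ g.support := by rwa [MvPolynomial.mem_support_iff]
      have hvi : uv.2 i < k := hg _ hvs
      have hui : uv.1 i + uv.2 i = m₀ i + k := by
        have := congrArg (fun m : σ →₀ ℕ => m i) huv
        simpa using this
      have hbig : m₀ i < uv.1 i := by omega
      have : uv.1 ∉ f.support := by
        intro hmem
        have := Finset.le_sup (f := fun m : σ →₀ ℕ => m i) hmem
        rw [hmax] at this
        omega
      rw [MvPolynomial.notMem_support_iff] at this
      rw [this, zero_mul]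
  rw [h1, h2, add_zero] at hc
  exact (MvPolynomial.mem_support_iff.mp hm₀) hc

end Helpers

section Helpers2
variable {R : Type*} [CommRing R]

lemma nzd_add_nilpotent {A : Type*} [CommRing A] {r n : A}
    (hr : r ∈ nonZeroDivisors A) (hn : IsNilpotent n) :
    r + n ∈ nonZeroDivisors A := by
  obtain ⟨k, hk⟩ := hn
  rw [mem_nonZeroDivisors_iff_right]
  intro f hf
  have key : ∀ j : ℕ, f * r ^ j = (-n) ^ j * f := by
    intro j
    induction j with
    | zero => simp
    | succ j ih =>
      have hfr : f * r = -n * f := by linear_combination hf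
      calc f * r ^ (j+1) = (f * r ^ j) * r := by ring
        _ = ((-n) ^ j * f) * r := by rw [ih]
        _ = (-n) ^ j * (f * r) := by ring
        _ = (-n) ^ j * (-n * f) := by rw [hfr]
        _ = (-n) ^ (j+1) * f := by ring
  have h0 : f * r ^ k = 0 := by
    rw [key k, neg_pow, hk, mul_zero, zero_mul]
  exact (mem_nonZeroDivisors_iff_right.mp (pow_mem hr k)) f h0

lemma nzd_sub_nilpotent {A : Type*} [CommRing A] {r n : A}
    (hr : r ∈ nonZeroDivisors A) (hn : IsNilpotent n) :
    r - n ∈ nonZeroDivisors A := by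
  rw [sub_eq_add_neg]; exact nzd_add_nilpotent hr hn.neg

lemma nzd_of_mul_nzd {A : Type*} [CommRing A] {x y : A}
    (h : x * y ∈ nonZeroDivisors A) : x ∈ nonZeroDivisors A := by
  rw [mem_nonZeroDivisors_iff_right]
  intro f hf
  exact (mem_nonZeroDivisors_iff_right.mp h) f (by rw [← mul_assoc, hf, zero_mul])

lemma nzd_C_mv {σ : Type*} {r : R} (hr : r ∈ nonZeroDivisors R) :
    (C r : MvPolynomial σ R) ∈ nonZeroDivisors (MvPolynomial σ R) := by
  rw [mem_nonZeroDivisors_iff_right]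
  intro f hf
  ext m
  have := congrArg (coeff m) hf
  rw [mul_comm, coeff_C_mul, coeff_zero] at this
  rw [coeff_zero]
  exact (mem_nonZeroDivisors_iff_right.mp hr) _ (by linear_combination this)

end Helpers2

section Helpers3
variable {R : Type*} [CommRing R]

/-- `X i` divides `f - f[X i := 0]`. -/
lemma X_dvd_sub_aeval {σ : Type*} [DecidableEq σ] (i : σ) (f : MvPolynomial σ R) :
    X i ∣ f - aeval (fun v => if v = i then 0 else X v) f := by
  induction f using MvPolynomial.induction_on with
  | C r => simp
  | add p q hp hq =>
    have : p + q - aeval (fun v => if v = i then 0 else X v) (p + q)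
        = (p - aeval (fun v => if v = i then 0 else X v) p)
          + (q - aeval (fun v => if v = i then 0 else X v) q) := by
      rw [map_add]; ring
    rw [this]
    exact dvd_add hp hq
  | mul_X p j hp =>
    rw [map_mul, aeval_X]
    by_cases hj : j = i
    · subst hj
      simp only [eq_self_iff_true, if_true, mul_zero, sub_zero]
      exact Dvd.intro_left p rfl
    · rw [if_neg hj]
      have : p * X j - aeval (fun v => if v = i then 0 else X v) p * X j
          = (p - aeval (fun v => if v = i then 0 else X v) p) * X j := by ring
      rw [this]
      exact Dvd.dvd.mul_right hp (X j)

lemma regular_X_mv {σ : Type*} [DecidableEq σ] (i : σ) :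
    (X i : MvPolynomial σ R) ∈ nonZeroDivisors (MvPolynomial σ R) := by
  have := regular_X_pow_add (R := R) i 1 0 (by simp)
  simpa using this

end Helpers3

section Helpers4
variable {R : Type*} [CommRing R]

lemma degreeOf_X_ne {σ : Type*} [DecidableEq σ] (i j : σ) (h : j ≠ i) :
    degreeOf i (X j : MvPolynomial σ R) = 0 := by
  rw [degreeOf_eq_sup]
  apply Nat.eq_zero_of_le_zero
  apply Finset.sup_le
  intro m hm
  have hm' : m ∈ ({Finsupp.single j 1} : Finset (σ →₀ ℕ)) :=
    support_monomial_subset (by exact hm)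
  rw [Finset.mem_singleton] at hm'
  subst hm'
  simp [Finsupp.single_apply, h]

lemma degreeOf_numeral_mul_le {σ : Type*} (i : σ) (n : ℕ) [n.AtLeastTwo]
    (f : MvPolynomial σ R) :
    degreeOf i ((OfNat.ofNat n : MvPolynomial σ R) * f) ≤ degreeOf i f := by
  have h : (OfNat.ofNat n : MvPolynomial σ R) = C (OfNat.ofNat n : R) := (map_ofNat C n).symm
  rw [h]
  calc degreeOf i (C (OfNat.ofNat n : R) * f)
      ≤ degreeOf i (C (OfNat.ofNat n : R)) + degreeOf i f := degreeOf_mul_le _ _ _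
    _ = degreeOf i f := by rw [degreeOf_C, zero_add]

end Helpers4

section Concrete
variable {R : Type*} [CommRing R]

local notation "SS" => MvPolynomial (Fin 2 × Fin 2) R

private lemma regular_b : (X ((0:Fin 2),(1:Fin 2)) : SS) ∈ nonZeroDivisors SS := regular_X_mv _
private lemma regular_c : (X ((1:Fin 2),(0:Fin 2)) : SS) ∈ nonZeroDivisors SS := regular_X_mv _

private lemma regular_h : (X ((0:Fin 2),(0:Fin 2)) - X ((1:Fin 2),(1:Fin 2)) : SS) ∈ nonZeroDivisors SS := by
  have hsup : ∀ m ∈ (-(X ((1:Fin 2),(1:Fin 2))) : SS).support, m ((0:Fin 2),(0:Fin 2)) < 1 := by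
    intro m hm
    rw [MvPolynomial.support_neg] at hm
    have hm' : m ∈ ({Finsupp.single ((1:Fin 2),(1:Fin 2)) 1} : Finset ((Fin 2 × Fin 2) →₀ ℕ)) :=
      support_monomial_subset hm
    rw [Finset.mem_singleton] at hm'
    subst hm'
    simp [Finsupp.single_apply]
  have := regular_X_pow_add (R := R) ((0:Fin 2),(0:Fin 2)) 1 (-(X ((1:Fin 2),(1:Fin 2)))) hsup
  have heq : (X ((0:Fin 2),(0:Fin 2)) : SS) ^ 1 + (-(X ((1:Fin 2),(1:Fin 2)))) = X ((0:Fin 2),(0:Fin 2)) - X ((1:Fin 2),(1:Fin 2)) := by ring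
  rwa [heq] at this

private lemma regular_disc :
    ((X ((0:Fin 2),(0:Fin 2)) - X ((1:Fin 2),(1:Fin 2)))^2 + 4*(X ((0:Fin 2),(1:Fin 2))*X ((1:Fin 2),(0:Fin 2))) : SS) ∈ nonZeroDivisors SS := by
  set g : SS := X ((1:Fin 2),(1:Fin 2))*X ((1:Fin 2),(1:Fin 2)) + 4*(X ((0:Fin 2),(1:Fin 2))*X ((1:Fin 2),(0:Fin 2))) - 2*(X ((0:Fin 2),(0:Fin 2))*X ((1:Fin 2),(1:Fin 2))) with hg
  have hXle : ∀ (i j : Fin 2 × Fin 2), degreeOf i (X j : SS) ≤ 1 := by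
    intro i j
    rw [degreeOf_eq_sup]
    apply Finset.sup_le
    intro m hm
    have hm' : m ∈ ({Finsupp.single j 1} : Finset ((Fin 2 × Fin 2) →₀ ℕ)) :=
      support_monomial_subset hm
    rw [Finset.mem_singleton] at hm'
    subst hm'
    simp [Finsupp.single_apply]
    split <;> norm_num
  have hdeg : degreeOf ((0:Fin 2),(0:Fin 2)) g < 2 := by
    have h1 : degreeOf ((0:Fin 2),(0:Fin 2)) (X ((1:Fin 2),(1:Fin 2))*X ((1:Fin 2),(1:Fin 2)) : SS) ≤ 0 := by
      calc degreeOf ((0:Fin 2),(0:Fin 2)) (X ((1:Fin 2),(1:Fin 2))*X ((1:Fin 2),(1:Fin 2)) : SS)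
          ≤ degreeOf ((0:Fin 2),(0:Fin 2)) (X ((1:Fin 2),(1:Fin 2)) : SS) + degreeOf ((0:Fin 2),(0:Fin 2)) (X ((1:Fin 2),(1:Fin 2)) : SS) :=
            degreeOf_mul_le _ _ _
        _ ≤ 0 := by rw [degreeOf_X_ne _ _ (by decide)]
    have h2 : degreeOf ((0:Fin 2),(0:Fin 2)) (4*(X ((0:Fin 2),(1:Fin 2))*X ((1:Fin 2),(0:Fin 2))) : SS) ≤ 0 := by
      refine le_trans (degreeOf_numeral_mul_le _ 4 _) ?_
      calc degreeOf ((0:Fin 2),(0:Fin 2)) (X ((0:Fin 2),(1:Fin 2))*X ((1:Fin 2),(0:Fin 2)) : SS)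
          ≤ degreeOf ((0:Fin 2),(0:Fin 2)) (X ((0:Fin 2),(1:Fin 2)) : SS) + degreeOf ((0:Fin 2),(0:Fin 2)) (X ((1:Fin 2),(0:Fin 2)) : SS) :=
            degreeOf_mul_le _ _ _
        _ ≤ 0 := by rw [degreeOf_X_ne _ _ (by decide), degreeOf_X_ne _ _ (by decide)]
    have h3 : degreeOf ((0:Fin 2),(0:Fin 2)) (2*(X ((0:Fin 2),(0:Fin 2))*X ((1:Fin 2),(1:Fin 2))) : SS) ≤ 1 := by
      refine le_trans (degreeOf_numeral_mul_le _ 2 _) ?_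
      calc degreeOf ((0:Fin 2),(0:Fin 2)) (X ((0:Fin 2),(0:Fin 2))*X ((1:Fin 2),(1:Fin 2)) : SS)
          ≤ degreeOf ((0:Fin 2),(0:Fin 2)) (X ((0:Fin 2),(0:Fin 2)) : SS) + degreeOf ((0:Fin 2),(0:Fin 2)) (X ((1:Fin 2),(1:Fin 2)) : SS) :=
            degreeOf_mul_le _ _ _
        _ ≤ 1 := by
            rw [degreeOf_X_ne ((0:Fin 2),(0:Fin 2)) ((1:Fin 2),(1:Fin 2)) (by decide)]
            simpa using hXle ((0:Fin 2),(0:Fin 2)) ((0:Fin 2),(0:Fin 2))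
    have h4 := degreeOf_sub_le ((0:Fin 2),(0:Fin 2)) (X ((1:Fin 2),(1:Fin 2))*X ((1:Fin 2),(1:Fin 2)) + 4*(X ((0:Fin 2),(1:Fin 2))*X ((1:Fin 2),(0:Fin 2))) : SS) (2*(X ((0:Fin 2),(0:Fin 2))*X ((1:Fin 2),(1:Fin 2))) : SS)
    have h5 := degreeOf_add_le ((0:Fin 2),(0:Fin 2)) (X ((1:Fin 2),(1:Fin 2))*X ((1:Fin 2),(1:Fin 2)) : SS) (4*(X ((0:Fin 2),(1:Fin 2))*X ((1:Fin 2),(0:Fin 2))) : SS)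
    rw [hg]
    omega
  have hsup := (degreeOf_lt_iff (by norm_num)).mp hdeg
  have := regular_X_pow_add (R := R) ((0:Fin 2),(0:Fin 2)) 2 g hsup
  have heq : (X ((0:Fin 2),(0:Fin 2)) : SS) ^ 2 + g = (X ((0:Fin 2),(0:Fin 2)) - X ((1:Fin 2),(1:Fin 2)))^2 + 4*(X ((0:Fin 2),(1:Fin 2))*X ((1:Fin 2),(0:Fin 2))) := by rw [hg]; ring
  rwa [heq] at this

private lemma div_by_var (i : Fin 2 × Fin 2) (f : SS)
    (hf0 : (aeval (fun v => if v = i then 0 else X v : Fin 2 × Fin 2 → SS)) f = 0) :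
    ∃ g, f = X i * g := by
  obtain ⟨g, hg⟩ := X_dvd_sub_aeval i f
  rw [hf0, sub_zero] at hg
  exact ⟨g, hg⟩

end Concrete

section MasterSec
variable {R : Type*} [CommRing R]

local notation "SS" => MvPolynomial (Fin 2 × Fin 2) R

private lemma master (h2 : (2:SS) ∈ nonZeroDivisors SS)
    (p q x y z w : SS) (hp : IsNilpotent p)
    (E1 : X ((0:Fin 2),(1:Fin 2)) * z - X ((1:Fin 2),(0:Fin 2)) * y = p * x + q)
    (E2 : (X ((0:Fin 2),(0:Fin 2)) - X ((1:Fin 2),(1:Fin 2))) * y + X ((0:Fin 2),(1:Fin 2)) * (w - x) = p * y)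
    (E3 : X ((1:Fin 2),(0:Fin 2)) * (x - w) - (X ((0:Fin 2),(0:Fin 2)) - X ((1:Fin 2),(1:Fin 2))) * z = p * z)
    (E4 : X ((1:Fin 2),(0:Fin 2)) * y - X ((0:Fin 2),(1:Fin 2)) * z = p * w + q) :
    p * x + q = 0 ∧ p * y = 0 ∧ p * z = 0 ∧ p * w + q = 0 := by
  -- substitution b ↦ 0
  have hby := congrArg (aeval (fun v => if v = ((0:Fin 2),(1:Fin 2)) then 0 else X v : Fin 2 × Fin 2 → SS)) E2
  simp only [map_add, map_sub, map_mul, map_zero, aeval_X, reduceIte, Prod.mk.injEq, Fin.isValue,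
    show ((0:Fin 2) = (1:Fin 2)) = False from by simp, show ((1:Fin 2) = (0:Fin 2)) = False from by simp,
    and_false, false_and, if_false, and_true, if_true] at hby
  have hby0 : (aeval (fun v => if v = ((0:Fin 2),(1:Fin 2)) then 0 else X v : Fin 2 × Fin 2 → SS)) y *
      ((X ((0:Fin 2),(0:Fin 2)) - X ((1:Fin 2),(1:Fin 2))) - (aeval (fun v => if v = ((0:Fin 2),(1:Fin 2)) then 0 else X v : Fin 2 × Fin 2 → SS)) p) = 0 := by
    linear_combination hby
  have hy0 : (aeval (fun v => if v = ((0:Fin 2),(1:Fin 2)) then 0 else X v : Fin 2 × Fin 2 → SS)) y = 0 :=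
    by
      have hn := nzd_sub_nilpotent (regular_h (R := R)) (hp.map (aeval (fun v => if v = ((0:Fin 2),(1:Fin 2)) then 0 else X v : Fin 2 × Fin 2 → SS)))
      exact mem_nonZeroDivisors_iff_right.mp hn _ hby0
  obtain ⟨y₁, hy₁⟩ := div_by_var ((0:Fin 2),(1:Fin 2)) y hy0
  -- substitution c ↦ 0
  have hcz := congrArg (aeval (fun v => if v = ((1:Fin 2),(0:Fin 2)) then 0 else X v : Fin 2 × Fin 2 → SS)) E3
  simp only [map_add, map_sub, map_mul, map_zero, aeval_X, reduceIte, Prod.mk.injEq, Fin.isValue,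
    show ((0:Fin 2) = (1:Fin 2)) = False from by simp, show ((1:Fin 2) = (0:Fin 2)) = False from by simp,
    and_false, false_and, if_false, and_true, if_true] at hcz
  have hcz0 : (aeval (fun v => if v = ((1:Fin 2),(0:Fin 2)) then 0 else X v : Fin 2 × Fin 2 → SS)) z *
      ((X ((0:Fin 2),(0:Fin 2)) - X ((1:Fin 2),(1:Fin 2))) + (aeval (fun v => if v = ((1:Fin 2),(0:Fin 2)) then 0 else X v : Fin 2 × Fin 2 → SS)) p) = 0 := by
    linear_combination -hcz
  have hz0 : (aeval (fun v => if v = ((1:Fin 2),(0:Fin 2)) then 0 else X v : Fin 2 × Fin 2 → SS)) z = 0 :=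
    by
      have hn := nzd_add_nilpotent (regular_h (R := R)) (hp.map (aeval (fun v => if v = ((1:Fin 2),(0:Fin 2)) then 0 else X v : Fin 2 × Fin 2 → SS)))
      exact mem_nonZeroDivisors_iff_right.mp hn _ hcz0
  obtain ⟨z₁, hz₁⟩ := div_by_var ((1:Fin 2),(0:Fin 2)) z hz0
  -- reduced equations
  have hM4 : ((X ((0:Fin 2),(0:Fin 2)) - X ((1:Fin 2),(1:Fin 2))) - p) * y₁ = x - w := by
    rw [← sub_eq_zero]
    apply (mem_nonZeroDivisors_iff_right.mp regular_b)
    linear_combination E2 - ((X ((0:Fin 2),(0:Fin 2)) - X ((1:Fin 2),(1:Fin 2))) - p) * hy₁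
  have hM5 : x - w = ((X ((0:Fin 2),(0:Fin 2)) - X ((1:Fin 2),(1:Fin 2))) + p) * z₁ := by
    rw [← sub_eq_zero]
    apply (mem_nonZeroDivisors_iff_right.mp regular_c)
    linear_combination E3 + ((X ((0:Fin 2),(0:Fin 2)) - X ((1:Fin 2),(1:Fin 2))) + p) * hz₁
  have hE14 : 2*(X ((0:Fin 2),(1:Fin 2))*X ((1:Fin 2),(0:Fin 2)))*(z₁ - y₁) = p*(x-w) := by
    linear_combination E1 - E4 - 2*X ((0:Fin 2),(1:Fin 2))*hz₁ + 2*X ((1:Fin 2),(0:Fin 2))*hy₁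
  have hKey : (((X ((0:Fin 2),(0:Fin 2)) - X ((1:Fin 2),(1:Fin 2)))^2 + 4*(X ((0:Fin 2),(1:Fin 2))*X ((1:Fin 2),(0:Fin 2)))) - p*p) * (z₁ - y₁) = 0 := by
    linear_combination (-((X ((0:Fin 2),(0:Fin 2)) - X ((1:Fin 2),(1:Fin 2))) + p))*hM4 + (-((X ((0:Fin 2),(0:Fin 2)) - X ((1:Fin 2),(1:Fin 2))) - p))*hM5 + 2*hE14
  have hpp : IsNilpotent (p*p) := by
    obtain ⟨k, hk⟩ := hp
    exact ⟨k, by rw [mul_pow, hk, zero_mul]⟩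
  have hs0 : z₁ - y₁ = 0 := by
    have hn := nzd_sub_nilpotent (regular_disc (R := R)) hpp
    apply (mem_nonZeroDivisors_iff_right.mp hn)
    linear_combination hKey
  have hpy2 : (p * y₁) * 2 = 0 := by
    linear_combination -hM4 - hM5 - ((X ((0:Fin 2),(0:Fin 2)) - X ((1:Fin 2),(1:Fin 2))) + p)*hs0
  have hpy₁ : p * y₁ = 0 := (mem_nonZeroDivisors_iff_right.mp h2) _ hpy2
  refine ⟨?_, ?_, ?_, ?_⟩
  · linear_combination -E1 + X ((0:Fin 2),(1:Fin 2))*hz₁ - X ((1:Fin 2),(0:Fin 2))*hy₁ + (X ((0:Fin 2),(1:Fin 2))*X ((1:Fin 2),(0:Fin 2)))*hs0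
  · linear_combination p*hy₁ + X ((0:Fin 2),(1:Fin 2))*hpy₁
  · linear_combination p*hz₁ + p*X ((1:Fin 2),(0:Fin 2))*hs0 + X ((1:Fin 2),(0:Fin 2))*hpy₁
  · linear_combination -E4 + X ((1:Fin 2),(0:Fin 2))*hy₁ - X ((0:Fin 2),(1:Fin 2))*hz₁ - (X ((0:Fin 2),(1:Fin 2))*X ((1:Fin 2),(0:Fin 2)))*hs0

private lemma central (x y z w : SS)
    (E1 : X ((0:Fin 2),(1:Fin 2)) * z - X ((1:Fin 2),(0:Fin 2)) * y = 0)
    (E2 : (X ((0:Fin 2),(0:Fin 2)) - X ((1:Fin 2),(1:Fin 2))) * y + X ((0:Fin 2),(1:Fin 2)) * (w - x) = 0) :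
    ∃ v, y = X ((0:Fin 2),(1:Fin 2)) * v ∧ z = X ((1:Fin 2),(0:Fin 2)) * v ∧ x - w = (X ((0:Fin 2),(0:Fin 2)) - X ((1:Fin 2),(1:Fin 2))) * v := by
  have hby := congrArg (aeval (fun v => if v = ((0:Fin 2),(1:Fin 2)) then 0 else X v : Fin 2 × Fin 2 → SS)) E2
  simp only [map_add, map_sub, map_mul, map_zero, aeval_X, reduceIte, Prod.mk.injEq, Fin.isValue,
    show ((0:Fin 2) = (1:Fin 2)) = False from by simp, show ((1:Fin 2) = (0:Fin 2)) = False from by simp,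
    and_false, false_and, if_false, and_true, if_true] at hby
  have hby0 : (aeval (fun v => if v = ((0:Fin 2),(1:Fin 2)) then 0 else X v : Fin 2 × Fin 2 → SS)) y *
      (X ((0:Fin 2),(0:Fin 2)) - X ((1:Fin 2),(1:Fin 2))) = 0 := by
    linear_combination hby
  have hy0 : (aeval (fun v => if v = ((0:Fin 2),(1:Fin 2)) then 0 else X v : Fin 2 × Fin 2 → SS)) y = 0 :=
    (mem_nonZeroDivisors_iff_right.mp regular_h) _ hby0
  obtain ⟨v, hv⟩ := div_by_var ((0:Fin 2),(1:Fin 2)) y hy0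
  refine ⟨v, hv, ?_, ?_⟩
  · rw [← sub_eq_zero]
    apply (mem_nonZeroDivisors_iff_right.mp regular_b)
    linear_combination E1 + X ((1:Fin 2),(0:Fin 2))*hv
  · rw [← sub_eq_zero]
    apply (mem_nonZeroDivisors_iff_right.mp regular_b)
    linear_combination -E2 + (X ((0:Fin 2),(0:Fin 2)) - X ((1:Fin 2),(1:Fin 2)))*hv

end MasterSec

set_option maxHeartbeats 2000000 in
/-- Let `α ∈ {2, 3, 4}` and `R` a commutative ring such that `2`
(if `α = 2`), `3!` (if `α = 3`), or `5!` (if `α = 4`) is not a zero-divisor. If `A` is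
the generic `2 × 2` matrix over `R` and `X` (over `R̃ = R[a₁₁, a₁₂, a₂₁, a₂₂]`) satisfies
`AX - XA = Xᵅ`, then `AX - XA = Xᵅ = 0` and each entry `xᵢⱼ` of `X` satisfies
`xᵢⱼ^(2α - 1) = 0`. -/
theorem stmt10 (α : ℕ) (hα : α = 2 ∨ α = 3 ∨ α = 4)
    (R : Type*) [CommRing R]
    (h2 : α = 2 → (2 : R) ∈ nonZeroDivisors R)
    (h3 : α = 3 → ((Nat.factorial 3 : ℕ) : R) ∈ nonZeroDivisors R)
    (h4 : α = 4 → ((Nat.factorial 5 : ℕ) : R) ∈ nonZeroDivisors R)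
    (A : Matrix (Fin 2) (Fin 2) (MvPolynomial (Fin 2 × Fin 2) R))
    (hA : ∀ i j, A i j = MvPolynomial.X (i, j))
    (X : Matrix (Fin 2) (Fin 2) (MvPolynomial (Fin 2 × Fin 2) R))
    (h : A * X - X * A = X ^ α) :
    A * X - X * A = 0 ∧ X ^ α = 0 ∧ ∀ i j, (X i j) ^ (2 * α - 1) = 0 := by
  rcases hα with rfl | rfl | rfl
  · -- α = 2
    have h2R : (2:R) ∈ nonZeroDivisors R := h2 rfl
    have h2S : (2 : MvPolynomial (Fin 2 × Fin 2) R) ∈ nonZeroDivisors _ := by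
      have := nzd_C_mv (σ := Fin 2 × Fin 2) h2R
      rwa [map_ofNat] at this
    rw [pow_two] at h
    have h00 := congrFun (congrFun h 0) 0
    have h01 := congrFun (congrFun h 0) 1
    have h10 := congrFun (congrFun h 1) 0
    have h11 := congrFun (congrFun h 1) 1
    simp only [Matrix.sub_apply, Matrix.mul_apply, Fin.sum_univ_two, hA] at h00 h01 h10 h11
    have hs2 : ((X 0 0) + (X 1 1))^2 - 2*((X 0 0)*(X 1 1) - (X 0 1)*(X 1 0)) = 0 := by linear_combination -h00 - h11
    have hs3 : ((X 0 0) + (X 1 1))^3 - 3*((X 0 0)*(X 1 1) - (X 0 1)*(X 1 0))*((X 0 0) + (X 1 1)) = 0 := by linear_combination -(X 0 0)*h00 - (X 1 0)*h01 - (X 0 1)*h10 - (X 1 1)*h11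
    have hdt : ((X 0 0)*(X 1 1) - (X 0 1)*(X 1 0))*((X 0 0) + (X 1 1)) = 0 := by linear_combination ((X 0 0) + (X 1 1))*hs2 - hs3
    have ht3 : ((X 0 0) + (X 1 1))^3 = 0 := by linear_combination hs3 + 3*hdt
    have hpnil : IsNilpotent (((X 0 0) + (X 1 1)) : MvPolynomial (Fin 2 × Fin 2) R) := ⟨3, ht3⟩
    obtain ⟨HN1, HN2, HN3, HN4⟩ := master h2S ((X 0 0) + (X 1 1)) (-((X 0 0)*(X 1 1) - (X 0 1)*(X 1 0))) (X 0 0) (X 0 1) (X 1 0) (X 1 1) hpnil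
      (by linear_combination h00) (by linear_combination h01)
      (by linear_combination h10) (by linear_combination h11)
    have hXX : X * X = 0 := by
      ext i j : 1
      fin_cases i <;> fin_cases j <;>
        simp only [Fin.zero_eta, Fin.mk_one, Matrix.mul_apply, Fin.sum_univ_two, Matrix.zero_apply]
      · linear_combination HN1
      · linear_combination HN2
      · linear_combination HN3
      · linear_combination HN4
    refine ⟨by rw [h]; exact hXX, by rw [pow_two]; exact hXX, ?_⟩
    have hE10 : (MvPolynomial.X ((0:Fin 2),(1:Fin 2)) : MvPolynomial (Fin 2 × Fin 2) R)*(X 1 0) - (MvPolynomial.X ((1:Fin 2),(0:Fin 2)) : MvPolynomial (Fin 2 × Fin 2) R)*(X 0 1) = 0 := by linear_combination h00 + HN1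
    have hE20 : ((MvPolynomial.X ((0:Fin 2),(0:Fin 2)) : MvPolynomial (Fin 2 × Fin 2) R) - (MvPolynomial.X ((1:Fin 2),(1:Fin 2)) : MvPolynomial (Fin 2 × Fin 2) R))*(X 0 1) + (MvPolynomial.X ((0:Fin 2),(1:Fin 2)) : MvPolynomial (Fin 2 × Fin 2) R)*((X 1 1)-(X 0 0)) = 0 := by linear_combination h01 + HN2
    obtain ⟨v, hyv, hzv, hxwv⟩ := central (X 0 0) (X 0 1) (X 1 0) (X 1 1) hE10 hE20
    have htv : ((X 0 0) + (X 1 1))*v = 0 := by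
      apply (mem_nonZeroDivisors_iff_right.mp regular_b)
      linear_combination HN2 - ((X 0 0) + (X 1 1))*hyv
    have hRv : v*v*(((MvPolynomial.X ((0:Fin 2),(0:Fin 2)) : MvPolynomial (Fin 2 × Fin 2) R) - (MvPolynomial.X ((1:Fin 2),(1:Fin 2)) : MvPolynomial (Fin 2 × Fin 2) R))^2 + 4*((MvPolynomial.X ((0:Fin 2),(1:Fin 2)) : MvPolynomial (Fin 2 × Fin 2) R)*(MvPolynomial.X ((1:Fin 2),(0:Fin 2)) : MvPolynomial (Fin 2 × Fin 2) R))) = ((X 0 0) + (X 1 1))*((X 0 0) + (X 1 1)) - 4*((X 0 0)*(X 1 1) - (X 0 1)*(X 1 0)) := by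
      linear_combination (-(((X 0 0)-(X 1 1))+((MvPolynomial.X ((0:Fin 2),(0:Fin 2)) : MvPolynomial (Fin 2 × Fin 2) R) - (MvPolynomial.X ((1:Fin 2),(1:Fin 2)) : MvPolynomial (Fin 2 × Fin 2) R))*v))*hxwv - 4*(X 1 0)*hyv - 4*((MvPolynomial.X ((0:Fin 2),(1:Fin 2)) : MvPolynomial (Fin 2 × Fin 2) R)*v)*hzv
    have hv3 : v^3 = 0 := by
      apply (mem_nonZeroDivisors_iff_right.mp regular_disc)
      linear_combination v*hRv + 2*v*hs2 - ((X 0 0) + (X 1 1))*htv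
    have ht2v : ((X 0 0) + (X 1 1))^2*v = 0 := by linear_combination ((X 0 0) + (X 1 1))*htv
    have htv2 : ((X 0 0) + (X 1 1))*v^2 = 0 := by linear_combination v*htv
    have h2x : 2*(X 0 0) = ((X 0 0) + (X 1 1)) + ((MvPolynomial.X ((0:Fin 2),(0:Fin 2)) : MvPolynomial (Fin 2 × Fin 2) R) - (MvPolynomial.X ((1:Fin 2),(1:Fin 2)) : MvPolynomial (Fin 2 × Fin 2) R))*v := by linear_combination hxwv
    have h2w : 2*(X 1 1) = ((X 0 0) + (X 1 1)) - ((MvPolynomial.X ((0:Fin 2),(0:Fin 2)) : MvPolynomial (Fin 2 × Fin 2) R) - (MvPolynomial.X ((1:Fin 2),(1:Fin 2)) : MvPolynomial (Fin 2 × Fin 2) R))*v := by linear_combination -hxwv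
    have hx3 : (X 0 0)^3 = 0 := by
      apply (mem_nonZeroDivisors_iff_right.mp (pow_mem h2S 3))
      linear_combination ((2*(X 0 0))^2 + (2*(X 0 0))*(((X 0 0) + (X 1 1))+((MvPolynomial.X ((0:Fin 2),(0:Fin 2)) : MvPolynomial (Fin 2 × Fin 2) R) - (MvPolynomial.X ((1:Fin 2),(1:Fin 2)) : MvPolynomial (Fin 2 × Fin 2) R))*v) + (((X 0 0) + (X 1 1))+((MvPolynomial.X ((0:Fin 2),(0:Fin 2)) : MvPolynomial (Fin 2 × Fin 2) R) - (MvPolynomial.X ((1:Fin 2),(1:Fin 2)) : MvPolynomial (Fin 2 × Fin 2) R))*v)^2) * h2x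
        + ht3 + 3*((MvPolynomial.X ((0:Fin 2),(0:Fin 2)) : MvPolynomial (Fin 2 × Fin 2) R) - (MvPolynomial.X ((1:Fin 2),(1:Fin 2)) : MvPolynomial (Fin 2 × Fin 2) R))*ht2v + 3*((MvPolynomial.X ((0:Fin 2),(0:Fin 2)) : MvPolynomial (Fin 2 × Fin 2) R) - (MvPolynomial.X ((1:Fin 2),(1:Fin 2)) : MvPolynomial (Fin 2 × Fin 2) R))^2*htv2 + ((MvPolynomial.X ((0:Fin 2),(0:Fin 2)) : MvPolynomial (Fin 2 × Fin 2) R) - (MvPolynomial.X ((1:Fin 2),(1:Fin 2)) : MvPolynomial (Fin 2 × Fin 2) R))^3*hv3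
    have hw3 : (X 1 1)^3 = 0 := by
      apply (mem_nonZeroDivisors_iff_right.mp (pow_mem h2S 3))
      linear_combination ((2*(X 1 1))^2 + (2*(X 1 1))*(((X 0 0) + (X 1 1))-((MvPolynomial.X ((0:Fin 2),(0:Fin 2)) : MvPolynomial (Fin 2 × Fin 2) R) - (MvPolynomial.X ((1:Fin 2),(1:Fin 2)) : MvPolynomial (Fin 2 × Fin 2) R))*v) + (((X 0 0) + (X 1 1))-((MvPolynomial.X ((0:Fin 2),(0:Fin 2)) : MvPolynomial (Fin 2 × Fin 2) R) - (MvPolynomial.X ((1:Fin 2),(1:Fin 2)) : MvPolynomial (Fin 2 × Fin 2) R))*v)^2) * h2w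
        + ht3 - 3*((MvPolynomial.X ((0:Fin 2),(0:Fin 2)) : MvPolynomial (Fin 2 × Fin 2) R) - (MvPolynomial.X ((1:Fin 2),(1:Fin 2)) : MvPolynomial (Fin 2 × Fin 2) R))*ht2v + 3*((MvPolynomial.X ((0:Fin 2),(0:Fin 2)) : MvPolynomial (Fin 2 × Fin 2) R) - (MvPolynomial.X ((1:Fin 2),(1:Fin 2)) : MvPolynomial (Fin 2 × Fin 2) R))^2*htv2 - ((MvPolynomial.X ((0:Fin 2),(0:Fin 2)) : MvPolynomial (Fin 2 × Fin 2) R) - (MvPolynomial.X ((1:Fin 2),(1:Fin 2)) : MvPolynomial (Fin 2 × Fin 2) R))^3*hv3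
    have hy3 : (X 0 1)^3 = 0 := by
      linear_combination ((X 0 1)^2 + (X 0 1)*((MvPolynomial.X ((0:Fin 2),(1:Fin 2)) : MvPolynomial (Fin 2 × Fin 2) R)*v) + ((MvPolynomial.X ((0:Fin 2),(1:Fin 2)) : MvPolynomial (Fin 2 × Fin 2) R)*v)^2)*hyv + (MvPolynomial.X ((0:Fin 2),(1:Fin 2)) : MvPolynomial (Fin 2 × Fin 2) R)^3*hv3
    have hz3 : (X 1 0)^3 = 0 := by
      linear_combination ((X 1 0)^2 + (X 1 0)*((MvPolynomial.X ((1:Fin 2),(0:Fin 2)) : MvPolynomial (Fin 2 × Fin 2) R)*v) + ((MvPolynomial.X ((1:Fin 2),(0:Fin 2)) : MvPolynomial (Fin 2 × Fin 2) R)*v)^2)*hzv + (MvPolynomial.X ((1:Fin 2),(0:Fin 2)) : MvPolynomial (Fin 2 × Fin 2) R)^3*hv3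
    have hexp : (2*2-1 : ℕ) = 3 := rfl
    intro i j
    fin_cases i <;> fin_cases j <;> rw [hexp]
    · exact hx3
    · exact hy3
    · exact hz3
    · exact hw3
  · -- α = 3
    have h2R : (2:R) ∈ nonZeroDivisors R := by
      apply nzd_of_mul_nzd (y := (3:R))
      have h6 := h3 rfl
      have : ((Nat.factorial 3 : ℕ) : R) = 2 * 3 := by norm_num [Nat.factorial]
      rwa [this] at h6
    have h2S : (2 : MvPolynomial (Fin 2 × Fin 2) R) ∈ nonZeroDivisors _ := by
      have := nzd_C_mv (σ := Fin 2 × Fin 2) h2R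
      rwa [map_ofNat] at this
    rw [pow_succ, pow_two] at h
    have h00 := congrFun (congrFun h 0) 0
    have h01 := congrFun (congrFun h 0) 1
    have h10 := congrFun (congrFun h 1) 0
    have h11 := congrFun (congrFun h 1) 1
    simp only [Matrix.sub_apply, Matrix.mul_apply, Fin.sum_univ_two, hA] at h00 h01 h10 h11
    have hs3 : ((X 0 0) + (X 1 1))^3 - 3*((X 0 0)*(X 1 1) - (X 0 1)*(X 1 0))*((X 0 0) + (X 1 1)) = 0 := by linear_combination -h00 - h11
    have hs4 : ((X 0 0) + (X 1 1))^4 - 4*((X 0 0)*(X 1 1) - (X 0 1)*(X 1 0))*((X 0 0) + (X 1 1))^2 + 2*((X 0 0)*(X 1 1) - (X 0 1)*(X 1 0))^2 = 0 := by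
      linear_combination -(X 0 0)*h00 - (X 1 0)*h01 - (X 0 1)*h10 - (X 1 1)*h11
    have hdt2 : ((X 0 0)*(X 1 1) - (X 0 1)*(X 1 0))*((X 0 0) + (X 1 1))^2 - 2*((X 0 0)*(X 1 1) - (X 0 1)*(X 1 0))^2 = 0 := by linear_combination ((X 0 0) + (X 1 1))*hs3 - hs4
    have hd2t : ((X 0 0)*(X 1 1) - (X 0 1)*(X 1 0))^2*((X 0 0) + (X 1 1)) = 0 := by linear_combination ((X 0 0) + (X 1 1))*hdt2 - ((X 0 0)*(X 1 1) - (X 0 1)*(X 1 0))*hs3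
    have hd3 : ((X 0 0)*(X 1 1) - (X 0 1)*(X 1 0))^3 = 0 := by
      apply (mem_nonZeroDivisors_iff_right.mp h2S)
      linear_combination -((X 0 0)*(X 1 1) - (X 0 1)*(X 1 0))*hdt2 + ((X 0 0) + (X 1 1))*hd2t
    have ht4 : ((X 0 0) + (X 1 1))^4 - 6*((X 0 0)*(X 1 1) - (X 0 1)*(X 1 0))^2 = 0 := by linear_combination ((X 0 0) + (X 1 1))*hs3 + 3*hdt2
    have ht5 : ((X 0 0) + (X 1 1))^5 = 0 := by linear_combination ((X 0 0) + (X 1 1))*ht4 + 6*hd2t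
    have hdt3 : ((X 0 0)*(X 1 1) - (X 0 1)*(X 1 0))*((X 0 0) + (X 1 1))^3 - 3*((X 0 0)*(X 1 1) - (X 0 1)*(X 1 0))^2*((X 0 0) + (X 1 1)) = 0 := by linear_combination ((X 0 0)*(X 1 1) - (X 0 1)*(X 1 0))*hs3
    have hpnil : IsNilpotent ((((X 0 0) + (X 1 1))^2 - ((X 0 0)*(X 1 1) - (X 0 1)*(X 1 0))) : MvPolynomial (Fin 2 × Fin 2) R) := by
      apply (Commute.all _ _).isNilpotent_sub
      · exact ⟨3, by linear_combination ((X 0 0) + (X 1 1))*ht5⟩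
      · exact ⟨3, hd3⟩
    obtain ⟨HN1, HN2, HN3, HN4⟩ := master h2S (((X 0 0) + (X 1 1))^2 - ((X 0 0)*(X 1 1) - (X 0 1)*(X 1 0))) (-(((X 0 0)*(X 1 1) - (X 0 1)*(X 1 0))*((X 0 0) + (X 1 1)))) (X 0 0) (X 0 1) (X 1 0) (X 1 1) hpnil
      (by linear_combination h00) (by linear_combination h01)
      (by linear_combination h10) (by linear_combination h11)
    have hXX : X * X * X = 0 := by
      ext i j : 1
      fin_cases i <;> fin_cases j <;>
        simp only [Fin.zero_eta, Fin.mk_one, Matrix.mul_apply, Fin.sum_univ_two, Matrix.zero_apply]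
      · linear_combination HN1
      · linear_combination HN2
      · linear_combination HN3
      · linear_combination HN4
    refine ⟨by rw [h]; exact hXX, by rw [pow_succ, pow_two]; exact hXX, ?_⟩
    have hE10 : (MvPolynomial.X ((0:Fin 2),(1:Fin 2)) : MvPolynomial (Fin 2 × Fin 2) R)*(X 1 0) - (MvPolynomial.X ((1:Fin 2),(0:Fin 2)) : MvPolynomial (Fin 2 × Fin 2) R)*(X 0 1) = 0 := by linear_combination h00 + HN1
    have hE20 : ((MvPolynomial.X ((0:Fin 2),(0:Fin 2)) : MvPolynomial (Fin 2 × Fin 2) R) - (MvPolynomial.X ((1:Fin 2),(1:Fin 2)) : MvPolynomial (Fin 2 × Fin 2) R))*(X 0 1) + (MvPolynomial.X ((0:Fin 2),(1:Fin 2)) : MvPolynomial (Fin 2 × Fin 2) R)*((X 1 1)-(X 0 0)) = 0 := by linear_combination h01 + HN2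
    obtain ⟨v, hyv, hzv, hxwv⟩ := central (X 0 0) (X 0 1) (X 1 0) (X 1 1) hE10 hE20
    have hpv : (((X 0 0) + (X 1 1))^2 - ((X 0 0)*(X 1 1) - (X 0 1)*(X 1 0)))*v = 0 := by
      apply (mem_nonZeroDivisors_iff_right.mp regular_b)
      linear_combination HN2 - (((X 0 0) + (X 1 1))^2 - ((X 0 0)*(X 1 1) - (X 0 1)*(X 1 0)))*hyv
    have hRv : v*v*(((MvPolynomial.X ((0:Fin 2),(0:Fin 2)) : MvPolynomial (Fin 2 × Fin 2) R) - (MvPolynomial.X ((1:Fin 2),(1:Fin 2)) : MvPolynomial (Fin 2 × Fin 2) R))^2 + 4*((MvPolynomial.X ((0:Fin 2),(1:Fin 2)) : MvPolynomial (Fin 2 × Fin 2) R)*(MvPolynomial.X ((1:Fin 2),(0:Fin 2)) : MvPolynomial (Fin 2 × Fin 2) R))) = ((X 0 0) + (X 1 1))*((X 0 0) + (X 1 1)) - 4*((X 0 0)*(X 1 1) - (X 0 1)*(X 1 0)) := by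
      linear_combination (-(((X 0 0)-(X 1 1))+((MvPolynomial.X ((0:Fin 2),(0:Fin 2)) : MvPolynomial (Fin 2 × Fin 2) R) - (MvPolynomial.X ((1:Fin 2),(1:Fin 2)) : MvPolynomial (Fin 2 × Fin 2) R))*v))*hxwv - 4*(X 1 0)*hyv - 4*((MvPolynomial.X ((0:Fin 2),(1:Fin 2)) : MvPolynomial (Fin 2 × Fin 2) R)*v)*hzv
    have hd2v : ((X 0 0)*(X 1 1) - (X 0 1)*(X 1 0))^2*v = 0 := by linear_combination ((X 0 0)*(X 1 1) - (X 0 1)*(X 1 0))*hpv - v*hdt2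
    have ht4v : ((X 0 0) + (X 1 1))^4*v = 0 := by linear_combination ((X 0 0) + (X 1 1))^2*hpv + ((X 0 0)*(X 1 1) - (X 0 1)*(X 1 0))*hpv + hd2v
    have hdtv2 : ((X 0 0)*(X 1 1) - (X 0 1)*(X 1 0))*((X 0 0) + (X 1 1))*v^2 = 0 := by
      apply (mem_nonZeroDivisors_iff_right.mp regular_disc)
      linear_combination ((X 0 0)*(X 1 1) - (X 0 1)*(X 1 0))*((X 0 0) + (X 1 1))*hRv + hdt3 - hd2t
    have ht3v2 : ((X 0 0) + (X 1 1))^3*v^2 = 0 := by linear_combination ((X 0 0) + (X 1 1))*v*hpv + hdtv2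
    have hdv3 : ((X 0 0)*(X 1 1) - (X 0 1)*(X 1 0))*v^3 = 0 := by
      apply (mem_nonZeroDivisors_iff_right.mp regular_disc)
      linear_combination ((X 0 0)*(X 1 1) - (X 0 1)*(X 1 0))*v*hRv + ((X 0 0)*(X 1 1) - (X 0 1)*(X 1 0))*hpv - 3*hd2v
    have ht2v3 : ((X 0 0) + (X 1 1))^2*v^3 = 0 := by linear_combination v^2*hpv + hdv3
    have htv4 : ((X 0 0) + (X 1 1))*v^4 = 0 := by
      apply (mem_nonZeroDivisors_iff_right.mp regular_disc)
      apply (mem_nonZeroDivisors_iff_right.mp regular_disc)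
      linear_combination ((X 0 0) + (X 1 1))*(v*v*(((MvPolynomial.X ((0:Fin 2),(0:Fin 2)) : MvPolynomial (Fin 2 × Fin 2) R) - (MvPolynomial.X ((1:Fin 2),(1:Fin 2)) : MvPolynomial (Fin 2 × Fin 2) R))^2 + 4*((MvPolynomial.X ((0:Fin 2),(1:Fin 2)) : MvPolynomial (Fin 2 × Fin 2) R)*(MvPolynomial.X ((1:Fin 2),(0:Fin 2)) : MvPolynomial (Fin 2 × Fin 2) R))) + ((X 0 0) + (X 1 1))*((X 0 0) + (X 1 1)) - 4*((X 0 0)*(X 1 1) - (X 0 1)*(X 1 0)))*hRv + ht5 - 8*hdt3 - 8*hd2t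
    have hv5 : v^5 = 0 := by
      apply (mem_nonZeroDivisors_iff_right.mp regular_disc)
      apply (mem_nonZeroDivisors_iff_right.mp regular_disc)
      linear_combination v*(v*v*(((MvPolynomial.X ((0:Fin 2),(0:Fin 2)) : MvPolynomial (Fin 2 × Fin 2) R) - (MvPolynomial.X ((1:Fin 2),(1:Fin 2)) : MvPolynomial (Fin 2 × Fin 2) R))^2 + 4*((MvPolynomial.X ((0:Fin 2),(1:Fin 2)) : MvPolynomial (Fin 2 × Fin 2) R)*(MvPolynomial.X ((1:Fin 2),(0:Fin 2)) : MvPolynomial (Fin 2 × Fin 2) R))) + ((X 0 0) + (X 1 1))*((X 0 0) + (X 1 1)) - 4*((X 0 0)*(X 1 1) - (X 0 1)*(X 1 0)))*hRv + ht4v - 8*((X 0 0)*(X 1 1) - (X 0 1)*(X 1 0))*hpv + 8*hd2v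
    have h2x : 2*(X 0 0) = ((X 0 0) + (X 1 1)) + ((MvPolynomial.X ((0:Fin 2),(0:Fin 2)) : MvPolynomial (Fin 2 × Fin 2) R) - (MvPolynomial.X ((1:Fin 2),(1:Fin 2)) : MvPolynomial (Fin 2 × Fin 2) R))*v := by linear_combination hxwv
    have h2w : 2*(X 1 1) = ((X 0 0) + (X 1 1)) - ((MvPolynomial.X ((0:Fin 2),(0:Fin 2)) : MvPolynomial (Fin 2 × Fin 2) R) - (MvPolynomial.X ((1:Fin 2),(1:Fin 2)) : MvPolynomial (Fin 2 × Fin 2) R))*v := by linear_combination -hxwv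
    have hx5 : (X 0 0)^5 = 0 := by
      apply (mem_nonZeroDivisors_iff_right.mp (pow_mem h2S 5))
      linear_combination ((2*(X 0 0))^4 + (2*(X 0 0))^3*(((X 0 0) + (X 1 1))+((MvPolynomial.X ((0:Fin 2),(0:Fin 2)) : MvPolynomial (Fin 2 × Fin 2) R) - (MvPolynomial.X ((1:Fin 2),(1:Fin 2)) : MvPolynomial (Fin 2 × Fin 2) R))*v) + (2*(X 0 0))^2*(((X 0 0) + (X 1 1))+((MvPolynomial.X ((0:Fin 2),(0:Fin 2)) : MvPolynomial (Fin 2 × Fin 2) R) - (MvPolynomial.X ((1:Fin 2),(1:Fin 2)) : MvPolynomial (Fin 2 × Fin 2) R))*v)^2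
          + (2*(X 0 0))*(((X 0 0) + (X 1 1))+((MvPolynomial.X ((0:Fin 2),(0:Fin 2)) : MvPolynomial (Fin 2 × Fin 2) R) - (MvPolynomial.X ((1:Fin 2),(1:Fin 2)) : MvPolynomial (Fin 2 × Fin 2) R))*v)^3 + (((X 0 0) + (X 1 1))+((MvPolynomial.X ((0:Fin 2),(0:Fin 2)) : MvPolynomial (Fin 2 × Fin 2) R) - (MvPolynomial.X ((1:Fin 2),(1:Fin 2)) : MvPolynomial (Fin 2 × Fin 2) R))*v)^4) * h2x
        + ht5 + 5*((MvPolynomial.X ((0:Fin 2),(0:Fin 2)) : MvPolynomial (Fin 2 × Fin 2) R) - (MvPolynomial.X ((1:Fin 2),(1:Fin 2)) : MvPolynomial (Fin 2 × Fin 2) R))*ht4v + 10*((MvPolynomial.X ((0:Fin 2),(0:Fin 2)) : MvPolynomial (Fin 2 × Fin 2) R) - (MvPolynomial.X ((1:Fin 2),(1:Fin 2)) : MvPolynomial (Fin 2 × Fin 2) R))^2*ht3v2 + 10*((MvPolynomial.X ((0:Fin 2),(0:Fin 2)) : MvPolynomial (Fin 2 × Fin 2) R) - (MvPolynomial.X ((1:Fin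 2),(1:Fin 2)) : MvPolynomial (Fin 2 × Fin 2) R))^3*ht2v3 + 5*((MvPolynomial.X ((0:Fin 2),(0:Fin 2)) : MvPolynomial (Fin 2 × Fin 2) R) - (MvPolynomial.X ((1:Fin 2),(1:Fin 2)) : MvPolynomial (Fin 2 × Fin 2) R))^4*htv4 + ((MvPolynomial.X ((0:Fin 2),(0:Fin 2)) : MvPolynomial (Fin 2 × Fin 2) R) - (MvPolynomial.X ((1:Fin 2),(1:Fin 2)) : MvPolynomial (Fin 2 × Fin 2) R))^5*hv5
    have hw5 : (X 1 1)^5 = 0 := by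
      apply (mem_nonZeroDivisors_iff_right.mp (pow_mem h2S 5))
      linear_combination ((2*(X 1 1))^4 + (2*(X 1 1))^3*(((X 0 0) + (X 1 1))-((MvPolynomial.X ((0:Fin 2),(0:Fin 2)) : MvPolynomial (Fin 2 × Fin 2) R) - (MvPolynomial.X ((1:Fin 2),(1:Fin 2)) : MvPolynomial (Fin 2 × Fin 2) R))*v) + (2*(X 1 1))^2*(((X 0 0) + (X 1 1))-((MvPolynomial.X ((0:Fin 2),(0:Fin 2)) : MvPolynomial (Fin 2 × Fin 2) R) - (MvPolynomial.X ((1:Fin 2),(1:Fin 2)) : MvPolynomial (Fin 2 × Fin 2) R))*v)^2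
          + (2*(X 1 1))*(((X 0 0) + (X 1 1))-((MvPolynomial.X ((0:Fin 2),(0:Fin 2)) : MvPolynomial (Fin 2 × Fin 2) R) - (MvPolynomial.X ((1:Fin 2),(1:Fin 2)) : MvPolynomial (Fin 2 × Fin 2) R))*v)^3 + (((X 0 0) + (X 1 1))-((MvPolynomial.X ((0:Fin 2),(0:Fin 2)) : MvPolynomial (Fin 2 × Fin 2) R) - (MvPolynomial.X ((1:Fin 2),(1:Fin 2)) : MvPolynomial (Fin 2 × Fin 2) R))*v)^4) * h2w
        + ht5 - 5*((MvPolynomial.X ((0:Fin 2),(0:Fin 2)) : MvPolynomial (Fin 2 × Fin 2) R) - (MvPolynomial.X ((1:Fin 2),(1:Fin 2)) : MvPolynomial (Fin 2 × Fin 2) R))*ht4v + 10*((MvPolynomial.X ((0:Fin 2),(0:Fin 2)) : MvPolynomial (Fin 2 × Fin 2) R) - (MvPolynomial.X ((1:Fin 2),(1:Fin 2)) : MvPolynomial (Fin 2 × Fin 2) R))^2*ht3v2 - 10*((MvPolynomial.X ((0:Fin 2),(0:Fin 2)) : MvPolynomial (Fin 2 × Fin 2) R) - (MvPolynomial.X ((1:Fin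 2),(1:Fin 2)) : MvPolynomial (Fin 2 × Fin 2) R))^3*ht2v3 + 5*((MvPolynomial.X ((0:Fin 2),(0:Fin 2)) : MvPolynomial (Fin 2 × Fin 2) R) - (MvPolynomial.X ((1:Fin 2),(1:Fin 2)) : MvPolynomial (Fin 2 × Fin 2) R))^4*htv4 - ((MvPolynomial.X ((0:Fin 2),(0:Fin 2)) : MvPolynomial (Fin 2 × Fin 2) R) - (MvPolynomial.X ((1:Fin 2),(1:Fin 2)) : MvPolynomial (Fin 2 × Fin 2) R))^5*hv5
    have hy5 : (X 0 1)^5 = 0 := by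
      linear_combination ((X 0 1)^4 + (X 0 1)^3*((MvPolynomial.X ((0:Fin 2),(1:Fin 2)) : MvPolynomial (Fin 2 × Fin 2) R)*v) + (X 0 1)^2*((MvPolynomial.X ((0:Fin 2),(1:Fin 2)) : MvPolynomial (Fin 2 × Fin 2) R)*v)^2 + (X 0 1)*((MvPolynomial.X ((0:Fin 2),(1:Fin 2)) : MvPolynomial (Fin 2 × Fin 2) R)*v)^3 + ((MvPolynomial.X ((0:Fin 2),(1:Fin 2)) : MvPolynomial (Fin 2 × Fin 2) R)*v)^4)*hyv
        + (MvPolynomial.X ((0:Fin 2),(1:Fin 2)) : MvPolynomial (Fin 2 × Fin 2) R)^5*hv5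
    have hz5 : (X 1 0)^5 = 0 := by
      linear_combination ((X 1 0)^4 + (X 1 0)^3*((MvPolynomial.X ((1:Fin 2),(0:Fin 2)) : MvPolynomial (Fin 2 × Fin 2) R)*v) + (X 1 0)^2*((MvPolynomial.X ((1:Fin 2),(0:Fin 2)) : MvPolynomial (Fin 2 × Fin 2) R)*v)^2 + (X 1 0)*((MvPolynomial.X ((1:Fin 2),(0:Fin 2)) : MvPolynomial (Fin 2 × Fin 2) R)*v)^3 + ((MvPolynomial.X ((1:Fin 2),(0:Fin 2)) : MvPolynomial (Fin 2 × Fin 2) R)*v)^4)*hzv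
        + (MvPolynomial.X ((1:Fin 2),(0:Fin 2)) : MvPolynomial (Fin 2 × Fin 2) R)^5*hv5
    have hexp : (2*3-1 : ℕ) = 5 := rfl
    intro i j
    fin_cases i <;> fin_cases j <;> rw [hexp]
    · exact hx5
    · exact hy5
    · exact hz5
    · exact hw5
  · -- α = 4
    have h2R : (2:R) ∈ nonZeroDivisors R := by
      apply nzd_of_mul_nzd (y := (60:R))
      have h120 := h4 rfl
      have : ((Nat.factorial 5 : ℕ) : R) = 2 * 60 := by norm_num [Nat.factorial]
      rwa [this] at h120
    have h2S : (2 : MvPolynomial (Fin 2 × Fin 2) R) ∈ nonZeroDivisors _ := by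
      have := nzd_C_mv (σ := Fin 2 × Fin 2) h2R
      rwa [map_ofNat] at this
    rw [pow_succ, pow_succ, pow_two] at h
    have h00 := congrFun (congrFun h 0) 0
    have h01 := congrFun (congrFun h 0) 1
    have h10 := congrFun (congrFun h 1) 0
    have h11 := congrFun (congrFun h 1) 1
    simp only [Matrix.sub_apply, Matrix.mul_apply, Fin.sum_univ_two, hA] at h00 h01 h10 h11
    have hs4 : ((X 0 0) + (X 1 1))^4 - 4*((X 0 0)*(X 1 1) - (X 0 1)*(X 1 0))*((X 0 0) + (X 1 1))^2 + 2*((X 0 0)*(X 1 1) - (X 0 1)*(X 1 0))^2 = 0 := by linear_combination -h00 - h11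
    have hs5 : ((X 0 0) + (X 1 1))^5 - 5*((X 0 0)*(X 1 1) - (X 0 1)*(X 1 0))*((X 0 0) + (X 1 1))^3 + 5*((X 0 0)*(X 1 1) - (X 0 1)*(X 1 0))^2*((X 0 0) + (X 1 1)) = 0 := by
      linear_combination -(X 0 0)*h00 - (X 1 0)*h01 - (X 0 1)*h10 - (X 1 1)*h11
    have hdt3 : ((X 0 0)*(X 1 1) - (X 0 1)*(X 1 0))*((X 0 0) + (X 1 1))^3 - 3*((X 0 0)*(X 1 1) - (X 0 1)*(X 1 0))^2*((X 0 0) + (X 1 1)) = 0 := by linear_combination ((X 0 0) + (X 1 1))*hs4 - hs5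
    have hd2t2 : ((X 0 0)*(X 1 1) - (X 0 1)*(X 1 0))^2*((X 0 0) + (X 1 1))^2 - 2*((X 0 0)*(X 1 1) - (X 0 1)*(X 1 0))^3 = 0 := by linear_combination ((X 0 0) + (X 1 1))*hdt3 - ((X 0 0)*(X 1 1) - (X 0 1)*(X 1 0))*hs4
    have hd3t : ((X 0 0)*(X 1 1) - (X 0 1)*(X 1 0))^3*((X 0 0) + (X 1 1)) = 0 := by linear_combination ((X 0 0) + (X 1 1))*hd2t2 - ((X 0 0)*(X 1 1) - (X 0 1)*(X 1 0))*hdt3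
    have hd4 : ((X 0 0)*(X 1 1) - (X 0 1)*(X 1 0))^4 = 0 := by
      apply (mem_nonZeroDivisors_iff_right.mp h2S)
      linear_combination -((X 0 0)*(X 1 1) - (X 0 1)*(X 1 0))*hd2t2 + ((X 0 0) + (X 1 1))*hd3t
    have ht5 : ((X 0 0) + (X 1 1))^5 - 10*((X 0 0)*(X 1 1) - (X 0 1)*(X 1 0))^2*((X 0 0) + (X 1 1)) = 0 := by linear_combination ((X 0 0) + (X 1 1))*hs4 + 4*hdt3
    have ht7 : ((X 0 0) + (X 1 1))^7 = 0 := by linear_combination ((X 0 0) + (X 1 1))^2*ht5 + 10*((X 0 0) + (X 1 1))*hd2t2 + 20*hd3t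
    have hpnil : IsNilpotent ((((X 0 0) + (X 1 1))^3 - 2*((X 0 0)*(X 1 1) - (X 0 1)*(X 1 0))*((X 0 0) + (X 1 1))) : MvPolynomial (Fin 2 × Fin 2) R) := by
      apply (Commute.all _ _).isNilpotent_sub
      · exact ⟨3, by linear_combination ((X 0 0) + (X 1 1))^2*ht7⟩
      · exact ⟨4, by linear_combination 16*((X 0 0) + (X 1 1))^4*hd4⟩
    obtain ⟨HN1, HN2, HN3, HN4⟩ := master h2S (((X 0 0) + (X 1 1))^3 - 2*((X 0 0)*(X 1 1) - (X 0 1)*(X 1 0))*((X 0 0) + (X 1 1))) (((X 0 0)*(X 1 1) - (X 0 1)*(X 1 0))^2 - ((X 0 0)*(X 1 1) - (X 0 1)*(X 1 0))*((X 0 0) + (X 1 1))^2) (X 0 0) (X 0 1) (X 1 0) (X 1 1) hpnil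
      (by linear_combination h00) (by linear_combination h01)
      (by linear_combination h10) (by linear_combination h11)
    have hXX : X * X * X * X = 0 := by
      ext i j : 1
      fin_cases i <;> fin_cases j <;>
        simp only [Fin.zero_eta, Fin.mk_one, Matrix.mul_apply, Fin.sum_univ_two, Matrix.zero_apply]
      · linear_combination HN1
      · linear_combination HN2
      · linear_combination HN3
      · linear_combination HN4
    refine ⟨by rw [h]; exact hXX, by rw [pow_succ, pow_succ, pow_two]; exact hXX, ?_⟩
    have hE10 : (MvPolynomial.X ((0:Fin 2),(1:Fin 2)) : MvPolynomial (Fin 2 × Fin 2) R)*(X 1 0) - (MvPolynomial.X ((1:Fin 2),(0:Fin 2)) : MvPolynomial (Fin 2 × Fin 2) R)*(X 0 1) = 0 := by linear_combination h00 + HN1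
    have hE20 : ((MvPolynomial.X ((0:Fin 2),(0:Fin 2)) : MvPolynomial (Fin 2 × Fin 2) R) - (MvPolynomial.X ((1:Fin 2),(1:Fin 2)) : MvPolynomial (Fin 2 × Fin 2) R))*(X 0 1) + (MvPolynomial.X ((0:Fin 2),(1:Fin 2)) : MvPolynomial (Fin 2 × Fin 2) R)*((X 1 1)-(X 0 0)) = 0 := by linear_combination h01 + HN2
    obtain ⟨v, hyv, hzv, hxwv⟩ := central (X 0 0) (X 0 1) (X 1 0) (X 1 1) hE10 hE20
    have hpv : (((X 0 0) + (X 1 1))^3 - 2*((X 0 0)*(X 1 1) - (X 0 1)*(X 1 0))*((X 0 0) + (X 1 1)))*v = 0 := by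
      apply (mem_nonZeroDivisors_iff_right.mp regular_b)
      linear_combination HN2 - (((X 0 0) + (X 1 1))^3 - 2*((X 0 0)*(X 1 1) - (X 0 1)*(X 1 0))*((X 0 0) + (X 1 1)))*hyv
    have hRv : v*v*(((MvPolynomial.X ((0:Fin 2),(0:Fin 2)) : MvPolynomial (Fin 2 × Fin 2) R) - (MvPolynomial.X ((1:Fin 2),(1:Fin 2)) : MvPolynomial (Fin 2 × Fin 2) R))^2 + 4*((MvPolynomial.X ((0:Fin 2),(1:Fin 2)) : MvPolynomial (Fin 2 × Fin 2) R)*(MvPolynomial.X ((1:Fin 2),(0:Fin 2)) : MvPolynomial (Fin 2 × Fin 2) R))) = ((X 0 0) + (X 1 1))*((X 0 0) + (X 1 1)) - 4*((X 0 0)*(X 1 1) - (X 0 1)*(X 1 0)) := by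
      linear_combination (-(((X 0 0)-(X 1 1))+((MvPolynomial.X ((0:Fin 2),(0:Fin 2)) : MvPolynomial (Fin 2 × Fin 2) R) - (MvPolynomial.X ((1:Fin 2),(1:Fin 2)) : MvPolynomial (Fin 2 × Fin 2) R))*v))*hxwv - 4*(X 1 0)*hyv - 4*((MvPolynomial.X ((0:Fin 2),(1:Fin 2)) : MvPolynomial (Fin 2 × Fin 2) R)*v)*hzv
    have hd3v : ((X 0 0)*(X 1 1) - (X 0 1)*(X 1 0))^3*v = 0 := by
      apply (mem_nonZeroDivisors_iff_right.mp h2S)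
      linear_combination -v*((X 0 0)*(X 1 1) - (X 0 1)*(X 1 0))*hs4 + ((X 0 0)*(X 1 1) - (X 0 1)*(X 1 0))*((X 0 0) + (X 1 1))*hpv - 2*v*hd2t2
    have hd2tv2 : ((X 0 0)*(X 1 1) - (X 0 1)*(X 1 0))^2*((X 0 0) + (X 1 1))*v^2 = 0 := by
      apply (mem_nonZeroDivisors_iff_right.mp regular_disc)
      linear_combination ((X 0 0)*(X 1 1) - (X 0 1)*(X 1 0))^2*((X 0 0) + (X 1 1))*hRv + ((X 0 0) + (X 1 1))*hd2t2 - 2*hd3t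
    have f1 : ((X 0 0) + (X 1 1))^6*v = 0 := by
      linear_combination ((X 0 0) + (X 1 1))^3*hpv + 2*((X 0 0)*(X 1 1) - (X 0 1)*(X 1 0))*((X 0 0) + (X 1 1))*hpv + 4*v*hd2t2 + 8*hd3v
    have f2 : ((X 0 0) + (X 1 1))^5*v^2 = 0 := by
      linear_combination ((X 0 0) + (X 1 1))^2*v*hpv + 2*((X 0 0)*(X 1 1) - (X 0 1)*(X 1 0))*v*hpv + 4*hd2tv2
    have hdt3v2 : ((X 0 0)*(X 1 1) - (X 0 1)*(X 1 0))*((X 0 0) + (X 1 1))^3*v^2 = 0 := by linear_combination ((X 0 0)*(X 1 1) - (X 0 1)*(X 1 0))*v*hpv + 2*hd2tv2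
    have hdt2v3 : ((X 0 0)*(X 1 1) - (X 0 1)*(X 1 0))*((X 0 0) + (X 1 1))^2*v^3 = 0 := by
      apply (mem_nonZeroDivisors_iff_right.mp regular_disc)
      linear_combination ((X 0 0)*(X 1 1) - (X 0 1)*(X 1 0))*((X 0 0) + (X 1 1))^2*v*hRv + ((X 0 0)*(X 1 1) - (X 0 1)*(X 1 0))*((X 0 0) + (X 1 1))*hpv - 2*v*hd2t2 - 4*hd3v
    have f3 : ((X 0 0) + (X 1 1))^4*v^3 = 0 := by linear_combination ((X 0 0) + (X 1 1))*v^2*hpv + 2*hdt2v3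
    have hdtv4 : ((X 0 0)*(X 1 1) - (X 0 1)*(X 1 0))*((X 0 0) + (X 1 1))*v^4 = 0 := by
      apply (mem_nonZeroDivisors_iff_right.mp regular_disc)
      linear_combination ((X 0 0)*(X 1 1) - (X 0 1)*(X 1 0))*((X 0 0) + (X 1 1))*v^2*hRv + ((X 0 0)*(X 1 1) - (X 0 1)*(X 1 0))*v*hpv + 2*hd2tv2 - 4*hd2tv2
    have f4 : ((X 0 0) + (X 1 1))^3*v^4 = 0 := by linear_combination v^3*hpv + 2*hdtv4
    have hd2v3 : ((X 0 0)*(X 1 1) - (X 0 1)*(X 1 0))^2*v^3 = 0 := by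
      apply (mem_nonZeroDivisors_iff_right.mp regular_disc)
      linear_combination ((X 0 0)*(X 1 1) - (X 0 1)*(X 1 0))^2*v*hRv + v*hd2t2 + 2*hd3v - 4*hd3v
    have f5 : ((X 0 0) + (X 1 1))^2*v^5 = 0 := by
      apply (mem_nonZeroDivisors_iff_right.mp regular_disc)
      apply (mem_nonZeroDivisors_iff_right.mp regular_disc)
      linear_combination ((X 0 0) + (X 1 1))^2*v*(v*v*(((MvPolynomial.X ((0:Fin 2),(0:Fin 2)) : MvPolynomial (Fin 2 × Fin 2) R) - (MvPolynomial.X ((1:Fin 2),(1:Fin 2)) : MvPolynomial (Fin 2 × Fin 2) R))^2 + 4*((MvPolynomial.X ((0:Fin 2),(1:Fin 2)) : MvPolynomial (Fin 2 × Fin 2) R)*(MvPolynomial.X ((1:Fin 2),(0:Fin 2)) : MvPolynomial (Fin 2 × Fin 2) R))) + ((X 0 0) + (X 1 1))*((X 0 0) + (X 1 1)) - 4*((X 0 0)*(X 1 1) - (X 0 1)*(X 1 0)))*hRv + f1 - 8*((X 0 0)*(X 1 1) - (X 0 1)*(X 1 0))*((X 0 0) + (X 1 1))*hpv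
    have f6 : ((X 0 0) + (X 1 1))*v^6 = 0 := by
      apply (mem_nonZeroDivisors_iff_right.mp regular_disc)
      apply (mem_nonZeroDivisors_iff_right.mp regular_disc)
      linear_combination ((X 0 0) + (X 1 1))*v^2*(v*v*(((MvPolynomial.X ((0:Fin 2),(0:Fin 2)) : MvPolynomial (Fin 2 × Fin 2) R) - (MvPolynomial.X ((1:Fin 2),(1:Fin 2)) : MvPolynomial (Fin 2 × Fin 2) R))^2 + 4*((MvPolynomial.X ((0:Fin 2),(1:Fin 2)) : MvPolynomial (Fin 2 × Fin 2) R)*(MvPolynomial.X ((1:Fin 2),(0:Fin 2)) : MvPolynomial (Fin 2 × Fin 2) R))) + ((X 0 0) + (X 1 1))*((X 0 0) + (X 1 1)) - 4*((X 0 0)*(X 1 1) - (X 0 1)*(X 1 0)))*hRv + f2 - 8*hdt3v2 + 16*hd2tv2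
    have f7 : v^7 = 0 := by
      apply (mem_nonZeroDivisors_iff_right.mp regular_disc)
      apply (mem_nonZeroDivisors_iff_right.mp regular_disc)
      linear_combination v^3*(v*v*(((MvPolynomial.X ((0:Fin 2),(0:Fin 2)) : MvPolynomial (Fin 2 × Fin 2) R) - (MvPolynomial.X ((1:Fin 2),(1:Fin 2)) : MvPolynomial (Fin 2 × Fin 2) R))^2 + 4*((MvPolynomial.X ((0:Fin 2),(1:Fin 2)) : MvPolynomial (Fin 2 × Fin 2) R)*(MvPolynomial.X ((1:Fin 2),(0:Fin 2)) : MvPolynomial (Fin 2 × Fin 2) R))) + ((X 0 0) + (X 1 1))*((X 0 0) + (X 1 1)) - 4*((X 0 0)*(X 1 1) - (X 0 1)*(X 1 0)))*hRv + f3 - 8*hdt2v3 + 16*hd2v3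
    have h2x : 2*(X 0 0) = ((X 0 0) + (X 1 1)) + ((MvPolynomial.X ((0:Fin 2),(0:Fin 2)) : MvPolynomial (Fin 2 × Fin 2) R) - (MvPolynomial.X ((1:Fin 2),(1:Fin 2)) : MvPolynomial (Fin 2 × Fin 2) R))*v := by linear_combination hxwv
    have h2w : 2*(X 1 1) = ((X 0 0) + (X 1 1)) - ((MvPolynomial.X ((0:Fin 2),(0:Fin 2)) : MvPolynomial (Fin 2 × Fin 2) R) - (MvPolynomial.X ((1:Fin 2),(1:Fin 2)) : MvPolynomial (Fin 2 × Fin 2) R))*v := by linear_combination -hxwv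
    have hx7 : (X 0 0)^7 = 0 := by
      apply (mem_nonZeroDivisors_iff_right.mp (pow_mem h2S 7))
      linear_combination ((2*(X 0 0))^6 + (2*(X 0 0))^5*(((X 0 0) + (X 1 1))+((MvPolynomial.X ((0:Fin 2),(0:Fin 2)) : MvPolynomial (Fin 2 × Fin 2) R) - (MvPolynomial.X ((1:Fin 2),(1:Fin 2)) : MvPolynomial (Fin 2 × Fin 2) R))*v) + (2*(X 0 0))^4*(((X 0 0) + (X 1 1))+((MvPolynomial.X ((0:Fin 2),(0:Fin 2)) : MvPolynomial (Fin 2 × Fin 2) R) - (MvPolynomial.X ((1:Fin 2),(1:Fin 2)) : MvPolynomial (Fin 2 × Fin 2) R))*v)^2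
          + (2*(X 0 0))^3*(((X 0 0) + (X 1 1))+((MvPolynomial.X ((0:Fin 2),(0:Fin 2)) : MvPolynomial (Fin 2 × Fin 2) R) - (MvPolynomial.X ((1:Fin 2),(1:Fin 2)) : MvPolynomial (Fin 2 × Fin 2) R))*v)^3 + (2*(X 0 0))^2*(((X 0 0) + (X 1 1))+((MvPolynomial.X ((0:Fin 2),(0:Fin 2)) : MvPolynomial (Fin 2 × Fin 2) R) - (MvPolynomial.X ((1:Fin 2),(1:Fin 2)) : MvPolynomial (Fin 2 × Fin 2) R))*v)^4 + (2*(X 0 0))*(((X 0 0) + (X 1 1))+((MvPolynomial.X ((0:Fin 2),(0:Fin 2)) : MvPolynomial (Fin 2 × Fin 2) R) - (MvPolynomial.X ((1:Fin 2),(1:Fin 2)) : MvPolynomial (Fin 2 × Fin 2) R))*v)^5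
          + (((X 0 0) + (X 1 1))+((MvPolynomial.X ((0:Fin 2),(0:Fin 2)) : MvPolynomial (Fin 2 × Fin 2) R) - (MvPolynomial.X ((1:Fin 2),(1:Fin 2)) : MvPolynomial (Fin 2 × Fin 2) R))*v)^6) * h2x
        + ht7 + 7*((MvPolynomial.X ((0:Fin 2),(0:Fin 2)) : MvPolynomial (Fin 2 × Fin 2) R) - (MvPolynomial.X ((1:Fin 2),(1:Fin 2)) : MvPolynomial (Fin 2 × Fin 2) R))*f1 + 21*((MvPolynomial.X ((0:Fin 2),(0:Fin 2)) : MvPolynomial (Fin 2 × Fin 2) R) - (MvPolynomial.X ((1:Fin 2),(1:Fin 2)) : MvPolynomial (Fin 2 × Fin 2) R))^2*f2 + 35*((MvPolynomial.X ((0:Fin 2),(0:Fin 2)) : MvPolynomial (Fin 2 × Fin 2) R) - (MvPolynomial.X ((1:Fin 2),(1:Fin 2)) : MvPolynomial (Fin 2 × Fin 2) R))^3*f3 + 35*((MvPolynomial.X ((0:Fin 2),(0:Fin 2)) : MvPolynomial (Fin 2 × Fin 2) R) - (MvPolynomial.X ((1:Fin 2),(1:Fin 2)) : MvPolynomial (Fin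 2 × Fin 2) R))^4*f4 + 21*((MvPolynomial.X ((0:Fin 2),(0:Fin 2)) : MvPolynomial (Fin 2 × Fin 2) R) - (MvPolynomial.X ((1:Fin 2),(1:Fin 2)) : MvPolynomial (Fin 2 × Fin 2) R))^5*f5
        + 7*((MvPolynomial.X ((0:Fin 2),(0:Fin 2)) : MvPolynomial (Fin 2 × Fin 2) R) - (MvPolynomial.X ((1:Fin 2),(1:Fin 2)) : MvPolynomial (Fin 2 × Fin 2) R))^6*f6 + ((MvPolynomial.X ((0:Fin 2),(0:Fin 2)) : MvPolynomial (Fin 2 × Fin 2) R) - (MvPolynomial.X ((1:Fin 2),(1:Fin 2)) : MvPolynomial (Fin 2 × Fin 2) R))^7*f7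
    have hw7 : (X 1 1)^7 = 0 := by
      apply (mem_nonZeroDivisors_iff_right.mp (pow_mem h2S 7))
      linear_combination ((2*(X 1 1))^6 + (2*(X 1 1))^5*(((X 0 0) + (X 1 1))-((MvPolynomial.X ((0:Fin 2),(0:Fin 2)) : MvPolynomial (Fin 2 × Fin 2) R) - (MvPolynomial.X ((1:Fin 2),(1:Fin 2)) : MvPolynomial (Fin 2 × Fin 2) R))*v) + (2*(X 1 1))^4*(((X 0 0) + (X 1 1))-((MvPolynomial.X ((0:Fin 2),(0:Fin 2)) : MvPolynomial (Fin 2 × Fin 2) R) - (MvPolynomial.X ((1:Fin 2),(1:Fin 2)) : MvPolynomial (Fin 2 × Fin 2) R))*v)^2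
          + (2*(X 1 1))^3*(((X 0 0) + (X 1 1))-((MvPolynomial.X ((0:Fin 2),(0:Fin 2)) : MvPolynomial (Fin 2 × Fin 2) R) - (MvPolynomial.X ((1:Fin 2),(1:Fin 2)) : MvPolynomial (Fin 2 × Fin 2) R))*v)^3 + (2*(X 1 1))^2*(((X 0 0) + (X 1 1))-((MvPolynomial.X ((0:Fin 2),(0:Fin 2)) : MvPolynomial (Fin 2 × Fin 2) R) - (MvPolynomial.X ((1:Fin 2),(1:Fin 2)) : MvPolynomial (Fin 2 × Fin 2) R))*v)^4 + (2*(X 1 1))*(((X 0 0) + (X 1 1))-((MvPolynomial.X ((0:Fin 2),(0:Fin 2)) : MvPolynomial (Fin 2 × Fin 2) R) - (MvPolynomial.X ((1:Fin 2),(1:Fin 2)) : MvPolynomial (Fin 2 × Fin 2) R))*v)^5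
          + (((X 0 0) + (X 1 1))-((MvPolynomial.X ((0:Fin 2),(0:Fin 2)) : MvPolynomial (Fin 2 × Fin 2) R) - (MvPolynomial.X ((1:Fin 2),(1:Fin 2)) : MvPolynomial (Fin 2 × Fin 2) R))*v)^6) * h2w
        + ht7 - 7*((MvPolynomial.X ((0:Fin 2),(0:Fin 2)) : MvPolynomial (Fin 2 × Fin 2) R) - (MvPolynomial.X ((1:Fin 2),(1:Fin 2)) : MvPolynomial (Fin 2 × Fin 2) R))*f1 + 21*((MvPolynomial.X ((0:Fin 2),(0:Fin 2)) : MvPolynomial (Fin 2 × Fin 2) R) - (MvPolynomial.X ((1:Fin 2),(1:Fin 2)) : MvPolynomial (Fin 2 × Fin 2) R))^2*f2 - 35*((MvPolynomial.X ((0:Fin 2),(0:Fin 2)) : MvPolynomial (Fin 2 × Fin 2) R) - (MvPolynomial.X ((1:Fin 2),(1:Fin 2)) : MvPolynomial (Fin 2 × Fin 2) R))^3*f3 + 35*((MvPolynomial.X ((0:Fin 2),(0:Fin 2)) : MvPolynomial (Fin 2 × Fin 2) R) - (MvPolynomial.X ((1:Fin 2),(1:Fin 2)) : MvPolynomial (Fin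 2 × Fin 2) R))^4*f4 - 21*((MvPolynomial.X ((0:Fin 2),(0:Fin 2)) : MvPolynomial (Fin 2 × Fin 2) R) - (MvPolynomial.X ((1:Fin 2),(1:Fin 2)) : MvPolynomial (Fin 2 × Fin 2) R))^5*f5
        + 7*((MvPolynomial.X ((0:Fin 2),(0:Fin 2)) : MvPolynomial (Fin 2 × Fin 2) R) - (MvPolynomial.X ((1:Fin 2),(1:Fin 2)) : MvPolynomial (Fin 2 × Fin 2) R))^6*f6 - ((MvPolynomial.X ((0:Fin 2),(0:Fin 2)) : MvPolynomial (Fin 2 × Fin 2) R) - (MvPolynomial.X ((1:Fin 2),(1:Fin 2)) : MvPolynomial (Fin 2 × Fin 2) R))^7*f7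
    have hy7 : (X 0 1)^7 = 0 := by
      linear_combination ((X 0 1)^6 + (X 0 1)^5*((MvPolynomial.X ((0:Fin 2),(1:Fin 2)) : MvPolynomial (Fin 2 × Fin 2) R)*v) + (X 0 1)^4*((MvPolynomial.X ((0:Fin 2),(1:Fin 2)) : MvPolynomial (Fin 2 × Fin 2) R)*v)^2 + (X 0 1)^3*((MvPolynomial.X ((0:Fin 2),(1:Fin 2)) : MvPolynomial (Fin 2 × Fin 2) R)*v)^3
        + (X 0 1)^2*((MvPolynomial.X ((0:Fin 2),(1:Fin 2)) : MvPolynomial (Fin 2 × Fin 2) R)*v)^4 + (X 0 1)*((MvPolynomial.X ((0:Fin 2),(1:Fin 2)) : MvPolynomial (Fin 2 × Fin 2) R)*v)^5 + ((MvPolynomial.X ((0:Fin 2),(1:Fin 2)) : MvPolynomial (Fin 2 × Fin 2) R)*v)^6)*hyv + (MvPolynomial.X ((0:Fin 2),(1:Fin 2)) : MvPolynomial (Fin 2 × Fin 2) R)^7*f7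
    have hz7 : (X 1 0)^7 = 0 := by
      linear_combination ((X 1 0)^6 + (X 1 0)^5*((MvPolynomial.X ((1:Fin 2),(0:Fin 2)) : MvPolynomial (Fin 2 × Fin 2) R)*v) + (X 1 0)^4*((MvPolynomial.X ((1:Fin 2),(0:Fin 2)) : MvPolynomial (Fin 2 × Fin 2) R)*v)^2 + (X 1 0)^3*((MvPolynomial.X ((1:Fin 2),(0:Fin 2)) : MvPolynomial (Fin 2 × Fin 2) R)*v)^3
        + (X 1 0)^2*((MvPolynomial.X ((1:Fin 2),(0:Fin 2)) : MvPolynomial (Fin 2 × Fin 2) R)*v)^4 + (X 1 0)*((MvPolynomial.X ((1:Fin 2),(0:Fin 2)) : MvPolynomial (Fin 2 × Fin 2) R)*v)^5 + ((MvPolynomial.X ((1:Fin 2),(0:Fin 2)) : MvPolynomial (Fin 2 × Fin 2) R)*v)^6)*hzv + (MvPolynomial.X ((1:Fin 2),(0:Fin 2)) : MvPolynomial (Fin 2 × Fin 2) R)^7*f7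
    have hexp : (2*4-1 : ℕ) = 7 := rfl
    intro i j
    fin_cases i <;> fin_cases j <;> rw [hexp]
    · exact hx7
    · exact hy7
    · exact hz7
    · exact hw7
end

section
/- Let $R$ be a commutative ring with unity, $\alpha \geq 2$, and $g$ a polynomial with coefficients in $R$ with $g(0) \neq 0$. Let $A \in M_n(R)$ be similar over $R$ to the block diagonal matrix $\mathrm{diag}(\lambda_1 I_{n_1}, \dots, \lambda_r I_{n_r})$ with $n_1 + \dots + n_r = n$, where for every $i \neq j$ the element $\lambda_i - \lambda_j$ is not a zero-divisor in $R$. If $X \in M_n(R)$ is a nilpotent matrix satisfying $XA - AX = X^{\alpha} g(X)$, then there exists $P \in GL_n(R)$ such that $A = P \, \mathrm{diag}(\lambda_1 I_{n_1}, \dots, \lambda_r I_{n_r}) \, P^{-1}$ and $X = P \, \mathrm{diag}(X_1, \dots, X_r) \, P^{-1}$, where $X_i \in M_{n_i}(R)$ and $X_i^{\alpha} g(X_i) = 0$ for every $i$. In particular $AX = XA$. -/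
open Polynomial Matrix

section conj
variable {R : Type*} [CommRing R] {A : Type*} [Ring A] [Algebra R A]

lemma stmt13_conj_pow (u : Aˣ) (x : A) (n : ℕ) :
    ((u⁻¹ : Aˣ) * x * u) ^ n = (u⁻¹ : Aˣ) * x ^ n * u := by
  induction n with
  | zero => simp [pow_zero]
  | succ n ih =>
      rw [pow_succ, ih, pow_succ]
      simp [mul_assoc, Units.mul_inv_cancel_left]

lemma stmt13_conj_aeval (u : Aˣ) (x : A) (p : R[X]) :
    aeval ((u⁻¹ : Aˣ) * x * u) p = (u⁻¹ : Aˣ) * aeval x p * u := by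
  induction p using Polynomial.induction_on' with
  | add p q hp hq => simp [map_add, hp, hq, mul_add, add_mul]
  | monomial n a =>
      simp only [aeval_monomial, stmt13_conj_pow]
      rw [← mul_assoc, ← mul_assoc, Algebra.commutes, mul_assoc ((u⁻¹:Aˣ):A)]

lemma stmt13_delta_pow (D Y G : A) (α : ℕ) (hc : G * Y = Y * G)
    (hY : Y * D - D * Y = Y ^ α * G) (j : ℕ) :
    Y ^ (j+1) * D - D * Y ^ (j+1) = (j+1) • (Y ^ (j+α) * G) := by
  induction j with
  | zero => simpa using hY
  | succ j ih =>
      have key : Y ^ (j+2) * D - D * Y ^ (j+2)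
          = Y ^ (j+1) * (Y * D - D * Y) + (Y ^ (j+1) * D - D * Y ^ (j+1)) * Y := by
        rw [pow_succ]; noncomm_ring
      have e : j + 1 + α = j + α + 1 := by omega
      have h2 : Y ^ (j + α) * G * Y = Y ^ (j + α + 1) * G := by
        rw [mul_assoc, hc, ← mul_assoc, ← pow_succ]
      have h3 : Y ^ (j+1) * (Y ^ α * G) = Y ^ (j + α + 1) * G := by
        rw [← mul_assoc, ← pow_add, show j + 1 + α = j + α + 1 by omega]
      rw [key, ih, hY, smul_mul_assoc, h2, h3, e,
        succ_nsmul (Y ^ (j + α + 1) * G) (j+1)]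
      exact (add_comm _ _)
end conj

section dd
variable {R : Type*} [CommRing R] {A : Type*} [Ring A] [Algebra R A]

lemma stmt13_delta_aeval (D Y : A) (g : R[X]) (α : ℕ)
    (hY : Y * D - D * Y = Y ^ α * aeval Y g) (p : R[X]) :
    aeval Y p * D - D * aeval Y p = aeval Y (X ^ α * g * derivative p) := by
  have hc : aeval Y g * Y = Y * aeval Y g := by
    have h1 : aeval Y (g * X) = aeval Y (X * g) := by rw [mul_comm]
    simpa [_root_.map_mul] using h1
  induction p using Polynomial.induction_on' with
  | add p q hp hq =>
      rw [map_add, derivative_add, mul_add (X ^ α * g), _root_.map_add, ← hp, ← hq]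
      noncomm_ring
  | monomial n a =>
      cases n with
      | zero =>
          simp [aeval_monomial, derivative_monomial, Algebra.commutes]
      | succ m =>
          have hd := stmt13_delta_pow D Y (aeval Y g) α hc hY m
          rw [aeval_monomial, derivative_monomial]
          have lhs : algebraMap R A a * Y^(m+1) * D - D * (algebraMap R A a * Y^(m+1))
              = algebraMap R A a * (Y^(m+1)*D - D*Y^(m+1)) := by
            rw [mul_sub, ← mul_assoc, ← Algebra.commutes a D, mul_assoc, mul_assoc]
          rw [lhs, hd, _root_.map_mul, _root_.map_mul, aeval_X_pow, aeval_monomial,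
            Nat.add_sub_cancel, _root_.map_mul, map_natCast, nsmul_eq_mul]
          have hGm : (aeval Y) g * Y ^ m = Y ^ m * (aeval Y) g :=
            (Commute.pow_right (by exact hc : Commute ((aeval Y) g) Y) m).eq
          have key : Y ^ α * (aeval Y) g * Y ^ m = Y ^ (m+α) * (aeval Y) g := by
            rw [mul_assoc, hGm, ← mul_assoc, ← pow_add, add_comm α m]
          calc algebraMap R A a * (↑(m+1) * (Y ^ (m + α) * (aeval Y) g))
              = algebraMap R A a * (↑(m+1) * (Y ^ α * (aeval Y) g * Y ^ m)) := by rw [key]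
            _ = Y ^ α * (aeval Y) g * (algebraMap R A a * ↑(m+1) * Y ^ m) := by
                rw [← mul_assoc, ← mul_assoc, ← mul_assoc]
                have hcN : ∀ w : A, algebraMap R A a * ((m+1 : ℕ) : A) * w
                    = w * (algebraMap R A a * ((m+1 : ℕ) : A)) := by
                  intro w
                  rw [mul_assoc, (Nat.cast_commute (m+1) w).eq, ← mul_assoc,
                    Algebra.commutes, mul_assoc]
                rw [mul_assoc (algebraMap R A a * ((m+1:ℕ):A)) (Y^α) ((aeval Y) g),
                  hcN (Y ^ α * (aeval Y) g), mul_assoc (Y ^ α * (aeval Y) g)]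
end dd

section dd2
variable {R : Type*} [CommRing R] {A : Type*} [Ring A] [Algebra R A]

lemma stmt13_deriv_dvd (p : R[X]) (k : ℕ) (hd : (X : R[X])^(k+1) ∣ p) :
    (X : R[X])^k ∣ derivative p := by
  obtain ⟨q, rfl⟩ := hd
  rw [derivative_mul, derivative_X_pow]
  refine dvd_add ?_ ?_
  · rw [Nat.add_sub_cancel]
    exact (Dvd.intro_left _ rfl).mul_right q
  · exact ((pow_dvd_pow (X : R[X]) (Nat.le_succ k)).mul_right _)

lemma stmt13_iter (D Y : A) (g : R[X]) (α : ℕ) (hα : 1 ≤ α)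
    (hY : Y * D - D * Y = Y ^ α * aeval Y g) (N : ℕ) :
    ∃ p : R[X], (X : R[X])^(N*(α-1)+1) ∣ p ∧
      (fun M => M * D - D * M)^[N] Y = aeval Y p := by
  induction N with
  | zero => exact ⟨X, by simpa using dvd_refl ((X : R[X])^1), by simp⟩
  | succ N ih =>
      obtain ⟨p, hdvd, hit⟩ := ih
      refine ⟨X ^ α * g * derivative p, ?_, ?_⟩
      · obtain ⟨q, hq⟩ := stmt13_deriv_dvd p _ hdvd
        refine ⟨g * q, ?_⟩
        rw [hq, show (N+1)*(α-1)+1 = α + N*(α-1) from by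
          have h1 : (N+1)*(α-1) = N*(α-1) + (α-1) := by ring
          omega, pow_add]
        ring
      · rw [Function.iterate_succ_apply', hit]
        exact stmt13_delta_aeval D Y g α hY p
end dd2

lemma stmt13_spec {n : Type*} [Fintype n] [DecidableEq n] {R : Type*} [CommRing R]
    (f : n → R) (M : Matrix n n R) (N : ℕ) (p q : n) :
    ((fun M => M * Matrix.diagonal f - Matrix.diagonal f * M)^[N] M) p q
      = M p q * (f q - f p)^N := by
  induction N generalizing M with
  | zero => simp
  | succ N ih =>
      rw [Function.iterate_succ_apply, ih]
      simp only [Matrix.sub_apply, Matrix.mul_diagonal, Matrix.diagonal_mul, pow_succ]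
      ring

def stmt13_bd {o : Type*} [DecidableEq o] [Fintype o] {m' : o → Type*}
    [∀ i, DecidableEq (m' i)] [∀ i, Fintype (m' i)] (R : Type*) [CommRing R] :
    (∀ i, Matrix (m' i) (m' i) R) →ₐ[R] Matrix (Σ i, m' i) (Σ i, m' i) R :=
  { Matrix.blockDiagonal'RingHom m' R with
    commutes' := fun r => by
      show Matrix.blockDiagonal' (algebraMap R (∀ i, Matrix (m' i) (m' i) R) r) = _
      rw [Algebra.algebraMap_eq_smul_one, Matrix.blockDiagonal'_smul,
        Matrix.blockDiagonal'_one, ← Algebra.algebraMap_eq_smul_one] }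


/-- Let `R` be a commutative ring, `α ≥ 2`, `g` a polynomial with
`g(0) ≠ 0`. Let `A` be similar over `R` to the block diagonal matrix
`diag(λ₁ I_{n₁}, …, λᵣ I_{nᵣ})` (indexed here by `Σ i, Fin (d i)` with `∑ d i = n`),
where each `λᵢ - λⱼ` (`i ≠ j`) is not a zero-divisor. If `X` is a nilpotent solution of
`XA - AX = Xᵅ g(X)`, then there is `P ∈ GLₙ(R)` conjugating `A` to the block diagonal
matrix and `X` to a block diagonal matrix `diag(X₁, …, Xᵣ)` with `Xᵢᵅ g(Xᵢ) = 0` for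
every `i`; in particular `AX = XA`. -/
theorem stmt13 (R : Type*) [CommRing R] (α : ℕ) (hα : 2 ≤ α)
    (g : Polynomial R) (hg : g.eval 0 ≠ 0)
    (n r : ℕ) (d : Fin r → ℕ) (hn : ∑ i, d i = n)
    (lam : Fin r → R)
    (hreg : ∀ i j, i ≠ j → lam i - lam j ∈ nonZeroDivisors R)
    (A : Matrix (Σ i, Fin (d i)) (Σ i, Fin (d i)) R)
    (hA : ∃ Q : GL (Σ i, Fin (d i)) R,
      A = (Q : Matrix (Σ i, Fin (d i)) (Σ i, Fin (d i)) R) *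
        Matrix.diagonal (fun p => lam p.1) *
        ((Q⁻¹ : GL (Σ i, Fin (d i)) R) : Matrix (Σ i, Fin (d i)) (Σ i, Fin (d i)) R))
    (X : Matrix (Σ i, Fin (d i)) (Σ i, Fin (d i)) R)
    (hX : IsNilpotent X)
    (h : X * A - A * X = X ^ α * Polynomial.aeval X g) :
    (∃ (P : GL (Σ i, Fin (d i)) R)
        (Xb : ∀ i, Matrix (Fin (d i)) (Fin (d i)) R),
      A = (P : Matrix (Σ i, Fin (d i)) (Σ i, Fin (d i)) R) *
        Matrix.diagonal (fun p => lam p.1) *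
        ((P⁻¹ : GL (Σ i, Fin (d i)) R) : Matrix (Σ i, Fin (d i)) (Σ i, Fin (d i)) R) ∧
      X = (P : Matrix (Σ i, Fin (d i)) (Σ i, Fin (d i)) R) *
        Matrix.blockDiagonal' Xb *
        ((P⁻¹ : GL (Σ i, Fin (d i)) R) : Matrix (Σ i, Fin (d i)) (Σ i, Fin (d i)) R) ∧
      ∀ i, (Xb i) ^ α * Polynomial.aeval (Xb i) g = 0) ∧
    A * X = X * A := by
  classical
  obtain ⟨Q, hQ⟩ := hA
  set Qm : Matrix (Σ i, Fin (d i)) (Σ i, Fin (d i)) R :=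
    (Q : Matrix (Σ i, Fin (d i)) (Σ i, Fin (d i)) R) with hQm
  set Qi : Matrix (Σ i, Fin (d i)) (Σ i, Fin (d i)) R :=
    ((Q⁻¹ : GL (Σ i, Fin (d i)) R) : Matrix (Σ i, Fin (d i)) (Σ i, Fin (d i)) R) with hQi
  have e3 : Qi * Qm = 1 := Units.inv_mul _
  have e4 : Qm * Qi = 1 := Units.mul_inv _
  have c1 : ∀ Z : Matrix (Σ i, Fin (d i)) (Σ i, Fin (d i)) R, Qm * (Qi * Z) = Z :=
    fun Z => by rw [← mul_assoc, e4, one_mul]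
  have c2 : ∀ Z : Matrix (Σ i, Fin (d i)) (Σ i, Fin (d i)) R, Qi * (Qm * Z) = Z :=
    fun Z => by rw [← mul_assoc, e3, one_mul]
  set Dm : Matrix (Σ i, Fin (d i)) (Σ i, Fin (d i)) R :=
    Matrix.diagonal (fun p : (Σ i, Fin (d i)) => lam p.1) with hDm
  set Y : Matrix (Σ i, Fin (d i)) (Σ i, Fin (d i)) R := Qi * X * Qm with hYdef
  have hXY : X = Qm * Y * Qi := by
    rw [hYdef]
    simp only [mul_assoc, c1, c2, e3, e4, mul_one]
  have key : Y * Dm - Dm * Y = Y ^ α * aeval Y g := by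
    have e1 : Y * Dm - Dm * Y = Qi * (X * A - A * X) * Qm := by
      rw [hQ, hYdef]
      simp only [mul_sub, sub_mul, mul_assoc, c1, c2, e3, e4, mul_one]
    have p1 : Y ^ α = Qi * X ^ α * Qm := stmt13_conj_pow Q X α
    have p2 : aeval Y g = Qi * aeval X g * Qm := stmt13_conj_aeval Q X g
    rw [e1, h, p1, p2]
    simp only [mul_assoc, c1, c2, e3, e4, mul_one]
  obtain ⟨m, hm⟩ := hX
  have hYnil : Y ^ m = 0 := by
    have p1 : Y ^ m = Qi * X ^ m * Qm := stmt13_conj_pow Q X m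
    rw [p1, hm, mul_zero, zero_mul]
  have hα1 : 1 ≤ α := by omega
  obtain ⟨p, hdvd, hit⟩ := stmt13_iter Dm Y g α hα1 key m
  have hzero : (fun M => M * Dm - Dm * M)^[m] Y = 0 := by
    rw [hit]
    have hmle : m ≤ m * (α - 1) + 1 := by
      have := Nat.le_mul_of_pos_right m (show 0 < α - 1 by omega)
      omega
    obtain ⟨q, rfl⟩ := dvd_trans (pow_dvd_pow (Polynomial.X : R[X]) hmle) hdvd
    rw [_root_.map_mul, aeval_X_pow, hYnil, zero_mul]
  have hoff : ∀ pp qq : (Σ i, Fin (d i)), pp.1 ≠ qq.1 → Y pp qq = 0 := by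
    intro pp qq hne
    have hspec := stmt13_spec (fun p : (Σ i, Fin (d i)) => lam p.1) Y m pp qq
    rw [← hDm, hzero] at hspec
    have hc := pow_mem (hreg qq.1 pp.1 (Ne.symm hne)) m
    exact (mul_right_mem_nonZeroDivisors_eq_zero_iff hc).mp (by simpa using hspec.symm)
  have hcomm : Y * Dm = Dm * Y := by
    ext pp qq
    rw [hDm, Matrix.mul_diagonal, Matrix.diagonal_mul]
    rcases eq_or_ne pp.1 qq.1 with he | hne
    · rw [he, mul_comm]
    · rw [hoff pp qq hne, zero_mul, mul_zero]
  have hYg : Y ^ α * aeval Y g = 0 := by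
    rw [← key, hcomm, sub_self]
  set Xb : ∀ i, Matrix (Fin (d i)) (Fin (d i)) R :=
    fun i => Matrix.of fun a b => Y ⟨i, a⟩ ⟨i, b⟩ with hXb
  have hYb : Y = Matrix.blockDiagonal' Xb := by
    ext ⟨i, a⟩ ⟨j, b⟩
    rcases eq_or_ne i j with rfl | hne
    · rw [Matrix.blockDiagonal'_apply_eq]
      rfl
    · rw [Matrix.blockDiagonal'_apply_ne _ _ _ hne]
      exact hoff _ _ hne
  have hb : ∀ i, (Xb i) ^ α * aeval (Xb i) g = 0 := by
    have hφY : stmt13_bd (m' := fun i => Fin (d i)) R Xb = Y := hYb.symm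
    have h0 : stmt13_bd (m' := fun i => Fin (d i)) R (Xb ^ α * aeval Xb g) = 0 := by
      rw [_root_.map_mul, map_pow, ← aeval_algHom_apply, hφY, hYg]
    have h1 : Xb ^ α * aeval Xb g = 0 := by
      apply Matrix.blockDiagonal'_injective
      rw [show Matrix.blockDiagonal' (Xb ^ α * aeval Xb g)
          = stmt13_bd (m' := fun i => Fin (d i)) R (Xb ^ α * aeval Xb g) from rfl, h0]
      exact (map_zero (stmt13_bd (m' := fun i => Fin (d i)) R)).symm
    intro i
    have h2 := congrFun h1 i
    rw [Pi.mul_apply, Pi.pow_apply, Pi.zero_apply] at h2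
    have h3 : aeval (Xb i) g = (aeval Xb g) i :=
      aeval_algHom_apply (Pi.evalAlgHom R (fun i => Matrix (Fin (d i)) (Fin (d i)) R) i) Xb g
    rw [h3]
    exact h2
  refine ⟨⟨Q, Xb, hQ, ?_, hb⟩, ?_⟩
  · rw [hXY, hYb]
  · have e1 : A * X = Qm * (Dm * Y) * Qi := by
      rw [hQ, hXY]
      simp only [mul_assoc, c1, c2, e3, e4, mul_one]
    have e2 : X * A = Qm * (Y * Dm) * Qi := by
      rw [hQ, hXY]
      simp only [mul_assoc, c1, c2, e3, e4, mul_one]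
    rw [e1, e2, hcomm]
end

section
/- Let $R$ be a commutative ring with unity, $\alpha \geq 2$, and $g$ a polynomial with coefficients in $R$ such that $g(0)$ is a unit of $R$. Let $A \in M_n(R)$ be similar over $R$ to $\mathrm{diag}(\lambda_1 I_{n_1}, \dots, \lambda_r I_{n_r})$ with $n_1 + \dots + n_r = n$, where for every $i \neq j$ the element $\lambda_i - \lambda_j$ is not a zero-divisor in $R$. If $X \in M_n(R)$ is a nilpotent matrix satisfying $XA - AX = X^{\alpha} g(X)$, then $X^{\alpha} = 0$. -/
open Polynomial

section Aux
variable {R : Type*} [CommRing R] {S : Type*} [Ring S] [Algebra R S]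

/-- Conjugation by a unit as an algebra automorphism: `x ↦ u⁻¹ x u`. -/
noncomputable def unitsConjAlg (u : Sˣ) : S ≃ₐ[R] S where
  toFun x := ↑u⁻¹ * x * ↑u
  invFun x := ↑u * x * ↑u⁻¹
  left_inv x := by simp [mul_assoc]
  right_inv x := by simp [mul_assoc]
  map_mul' x y := by simp [mul_assoc]
  map_add' x y := by noncomm_ring
  commutes' r := by
    simp only [Algebra.algebraMap_eq_smul_one]
    simp [mul_smul_comm, smul_mul_assoc]

lemma unitsConjAlg_apply (u : Sˣ) (x : S) :
    unitsConjAlg (R := R) u x = ↑u⁻¹ * x * ↑u := rfl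

lemma aeval_mul_comm (Y : S) (p q : R[X]) :
    aeval Y p * aeval Y q = aeval Y q * aeval Y p := by
  rw [← map_mul, ← map_mul, mul_comm]

lemma commute_aeval (Y : S) (p : R[X]) : Commute Y (aeval Y p) := by
  have h := aeval_mul_comm Y Polynomial.X p
  rw [aeval_X] at h
  exact h

/-- The derivation `M ↦ M*D - D*M` acts on polynomials of `Y` via the derivative,
provided the commutator of `Y` and `D` commutes with `Y`. -/
lemma comm_aeval (Y D : S) (hc : Commute Y (Y * D - D * Y)) (p : R[X]) :
    aeval Y p * D - D * aeval Y p = aeval Y (derivative p) * (Y * D - D * Y) := by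
  induction p using Polynomial.induction_on with
  | C a =>
      simp only [aeval_C, derivative_C, map_zero, zero_mul]
      rw [Algebra.commutes]
      exact sub_self _
  | add p q hp hq =>
      have hd : (aeval Y (derivative p) + aeval Y (derivative q)) * (Y * D - D * Y)
          = aeval Y (derivative p) * (Y * D - D * Y)
            + aeval Y (derivative q) * (Y * D - D * Y) := add_mul _ _ _
      rw [map_add, derivative_add, map_add, hd, ← hp, ← hq]
      noncomm_ring
  | monomial n a ih =>
      have hsplit : (C a * Polynomial.X ^ (n + 1)) = (C a * Polynomial.X ^ n) * Polynomial.X := by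
        ring
      have hder : derivative (C a * Polynomial.X ^ (n + 1))
          = C a * Polynomial.X ^ n + Polynomial.X * derivative (C a * Polynomial.X ^ n) := by
        cases n with
        | zero => simp
        | succ m =>
            simp only [derivative_C_mul, derivative_X_pow]
            push_cast
            simp only [Nat.add_sub_cancel, C_add, C_1, C_mul]
            ring
      have hcm : ∀ pp : R[X], Y * aeval Y pp = aeval Y pp * Y :=
        fun pp => (commute_aeval Y pp).eq
      calc aeval Y (C a * Polynomial.X ^ (n + 1)) * D - D * aeval Y (C a * Polynomial.X ^ (n + 1))
          = (aeval Y (C a * Polynomial.X ^ n) * Y) * D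
            - D * (aeval Y (C a * Polynomial.X ^ n) * Y) := by
            rw [hsplit, map_mul, aeval_X]
        _ = aeval Y (C a * Polynomial.X ^ n) * (Y * D - D * Y)
            + (aeval Y (C a * Polynomial.X ^ n) * D - D * aeval Y (C a * Polynomial.X ^ n)) * Y := by
            noncomm_ring
        _ = aeval Y (C a * Polynomial.X ^ n) * (Y * D - D * Y)
            + (aeval Y (derivative (C a * Polynomial.X ^ n)) * (Y * D - D * Y)) * Y := by
            rw [ih]
        _ = aeval Y (C a * Polynomial.X ^ n) * (Y * D - D * Y)
            + (Y * aeval Y (derivative (C a * Polynomial.X ^ n))) * (Y * D - D * Y) := by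
            rw [mul_assoc, ← hc.eq, ← mul_assoc, ← hcm]
        _ = aeval Y (derivative (C a * Polynomial.X ^ (n + 1))) * (Y * D - D * Y) := by
            rw [hder]
            simp only [map_add, map_mul, aeval_X, add_mul]
end Aux

/-- The sequence of polynomials `P 0 = X^α g`, `P (s+1) = P s' · X^α g`. -/
noncomputable def Pseq {R : Type*} [CommRing R] (α : ℕ) (g : R[X]) : ℕ → R[X]
  | 0 => Polynomial.X ^ α * g
  | s + 1 => derivative (Pseq α g s) * (Polynomial.X ^ α * g)

lemma Pseq_dvd {R : Type*} [CommRing R] (α : ℕ) (hα : 2 ≤ α) (g : R[X]) :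
    ∀ s, Polynomial.X ^ (α + s) ∣ Pseq α g s := by
  intro s
  induction s with
  | zero => simpa [Pseq] using dvd_mul_right (Polynomial.X ^ α (R := R)) g
  | succ s ih =>
      obtain ⟨q, hq⟩ := ih
      have h1 : Polynomial.X ^ (α + s - 1) ∣ derivative (Pseq α g s) := by
        rw [hq, derivative_mul, derivative_X_pow]
        exact dvd_add ((dvd_mul_left _ _).mul_right q)
          ((pow_dvd_pow _ (by omega)).mul_right _)
      have h2 : Polynomial.X ^ (α + s - 1 + α) ∣ Pseq α g (s + 1) := by
        show Polynomial.X ^ (α + s - 1 + α) ∣ derivative (Pseq α g s) * (Polynomial.X ^ α * g)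
        rw [pow_add]
        exact mul_dvd_mul h1 (dvd_mul_right _ _)
      exact dvd_trans (pow_dvd_pow _ (by omega)) h2

section Core
variable {R : Type*} [CommRing R]

/-- The key vanishing criterion from the block-diagonal structure. -/
lemma crit {ι : Type*} [Fintype ι] [DecidableEq ι] {r : ℕ} (lam : Fin r → R) (f : ι → Fin r)
    (hreg : ∀ i j, i ≠ j → lam i - lam j ∈ nonZeroDivisors R)
    (M M' : Matrix ι ι R)
    (hM : M = M' * Matrix.diagonal (fun p => lam (f p)) - Matrix.diagonal (fun p => lam (f p)) * M')
    (h0 : M * Matrix.diagonal (fun p => lam (f p)) - Matrix.diagonal (fun p => lam (f p)) * M = 0) :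
    M = 0 := by
  ext p q
  simp only [Matrix.zero_apply]
  have e0 : M p q * lam (f q) - lam (f p) * M p q = 0 := by
    have := congrFun (congrFun h0 p) q
    simpa [Matrix.sub_apply, Matrix.mul_diagonal, Matrix.diagonal_mul] using this
  have e0' : M p q * (lam (f q) - lam (f p)) = 0 := by linear_combination e0
  by_cases hpq : f p = f q
  · have eM : M p q = M' p q * lam (f q) - lam (f p) * M' p q := by
      have := congrFun (congrFun hM p) q
      simpa [Matrix.sub_apply, Matrix.mul_diagonal, Matrix.diagonal_mul] using this
    rw [eM, hpq]
    ring
  · exact mem_nonZeroDivisors_iff_right.mp (hreg (f q) (f p) (fun hh => hpq hh.symm)) _ e0'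

/-- Core result: the diagonal case. -/
lemma core {ι : Type*} [Fintype ι] [DecidableEq ι] {r : ℕ} (lam : Fin r → R) (f : ι → Fin r)
    (hreg : ∀ i j, i ≠ j → lam i - lam j ∈ nonZeroDivisors R)
    (α : ℕ) (hα : 2 ≤ α) (g : R[X]) (hg : IsUnit (g.eval 0))
    (Y : Matrix ι ι R) (hY : IsNilpotent Y)
    (h : Y * Matrix.diagonal (fun p => lam (f p)) - Matrix.diagonal (fun p => lam (f p)) * Y
        = Y ^ α * aeval Y g) :
    Y ^ α = 0 := by
  have hP0 : Pseq α g 0 = Polynomial.X ^ α * g := rfl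
  have hPsucc : ∀ s, Pseq α g (s + 1) = derivative (Pseq α g s) * (Polynomial.X ^ α * g) :=
    fun s => rfl
  have hN : Y * Matrix.diagonal (fun p => lam (f p)) - Matrix.diagonal (fun p => lam (f p)) * Y
      = aeval Y (Pseq α g 0) := by
    rw [h, hP0, map_mul, aeval_X_pow]
  have hc : Commute Y (Y * Matrix.diagonal (fun p => lam (f p))
      - Matrix.diagonal (fun p => lam (f p)) * Y) := by
    rw [hN]; exact commute_aeval Y _
  have hδ : ∀ s, aeval Y (Pseq α g s) * Matrix.diagonal (fun p => lam (f p))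
      - Matrix.diagonal (fun p => lam (f p)) * aeval Y (Pseq α g s)
      = aeval Y (Pseq α g (s + 1)) := by
    intro s
    rw [comm_aeval Y _ hc (Pseq α g s), hN, ← map_mul, ← hP0.symm, hPsucc s, map_mul, map_mul]
  obtain ⟨K, hK⟩ := hY
  have hvanish : ∀ s, K ≤ α + s → aeval Y (Pseq α g s) = 0 := by
    intro s hs
    obtain ⟨q, hq⟩ := Pseq_dvd α hα g s
    rw [hq, map_mul, aeval_X_pow, pow_eq_zero_of_le hs hK, zero_mul]
  have main : ∀ j, aeval Y (Pseq α g (K - j)) = 0 := by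
    intro j
    induction j with
    | zero => exact hvanish _ (by omega)
    | succ j ih =>
        by_cases hj : j < K
        · have hs1 : K - j = (K - (j + 1)) + 1 := by omega
          have h0 : aeval Y (Pseq α g (K - (j + 1))) * Matrix.diagonal (fun p => lam (f p))
              - Matrix.diagonal (fun p => lam (f p)) * aeval Y (Pseq α g (K - (j + 1))) = 0 := by
            rw [hδ (K - (j + 1)), ← hs1, ih]
          generalize hgen : K - (j + 1) = s at h0 ⊢
          cases s with
          | zero => exact crit lam f hreg _ Y hN.symm h0
          | succ t => exact crit lam f hreg _ (aeval Y (Pseq α g t)) (hδ t).symm h0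
        · have heq : K - (j + 1) = K - j := by omega
          rw [heq]; exact ih
  have hfin : Y ^ α * aeval Y g = 0 := by
    have hm := main K
    rw [Nat.sub_self, hP0, map_mul, aeval_X_pow] at hm
    exact hm
  -- `g(Y)` is a unit since `g(0)` is a unit and `Y` is nilpotent
  have hXg : Polynomial.X ∣ g - C (g.eval 0) := by
    rw [Polynomial.X_dvd_iff]
    simp [coeff_zero_eq_eval_zero]
  obtain ⟨q, hq⟩ := hXg
  have hgY : aeval Y g = Y * aeval Y q + algebraMap R (Matrix ι ι R) (g.eval 0) := by
    have hgeq : g = Polynomial.X * q + C (g.eval 0) := by rw [← hq]; ring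
    conv_lhs => rw [hgeq]
    rw [map_add, map_mul, aeval_X, aeval_C]
  have hnil : IsNilpotent (Y * aeval Y q) :=
    (commute_aeval Y q).isNilpotent_mul_right ⟨K, hK⟩
  have hunit : IsUnit (aeval Y g) := by
    rw [hgY]
    refine IsNilpotent.isUnit_add_right_of_commute hnil
      (hg.map (algebraMap R (Matrix ι ι R))) ?_
    exact (Algebra.commutes (g.eval 0) (Y * aeval Y q)).symm
  obtain ⟨v, hv⟩ := hunit
  calc Y ^ α = Y ^ α * aeval Y g * ↑v⁻¹ := by rw [← hv]; simp [mul_assoc]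
    _ = 0 := by rw [hfin, zero_mul]
end Core

set_option maxHeartbeats 1600000 in
/-- Let `R` be a commutative ring, `α ≥ 2`, `g` a polynomial with
`g(0)` a unit. Let `A` be similar over `R` to `diag(λ₁ I_{n₁}, …, λᵣ I_{nᵣ})` (indexed
here by `Σ i, Fin (d i)` with `∑ d i = n`), where each `λᵢ - λⱼ` (`i ≠ j`) is not a
zero-divisor. If `X` is a nilpotent solution of `XA - AX = Xᵅ g(X)`, then `Xᵅ = 0`. -/
theorem stmt14 (R : Type*) [CommRing R] (α : ℕ) (hα : 2 ≤ α)
    (g : Polynomial R) (hg : IsUnit (g.eval 0))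
    (n r : ℕ) (d : Fin r → ℕ) (hn : ∑ i, d i = n)
    (lam : Fin r → R)
    (hreg : ∀ i j, i ≠ j → lam i - lam j ∈ nonZeroDivisors R)
    (A : Matrix (Σ i, Fin (d i)) (Σ i, Fin (d i)) R)
    (hA : ∃ Q : GL (Σ i, Fin (d i)) R,
      A = (Q : Matrix (Σ i, Fin (d i)) (Σ i, Fin (d i)) R) *
        Matrix.diagonal (fun p => lam p.1) *
        ((Q⁻¹ : GL (Σ i, Fin (d i)) R) : Matrix (Σ i, Fin (d i)) (Σ i, Fin (d i)) R))
    (X : Matrix (Σ i, Fin (d i)) (Σ i, Fin (d i)) R)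
    (hX : IsNilpotent X)
    (h : X * A - A * X = X ^ α * Polynomial.aeval X g) :
    X ^ α = 0 := by
  obtain ⟨Q, hAQ⟩ := hA
  let φ : Matrix (Σ i, Fin (d i)) (Σ i, Fin (d i)) R ≃ₐ[R]
      Matrix (Σ i, Fin (d i)) (Σ i, Fin (d i)) R := unitsConjAlg Q
  have hφ_apply : ∀ M : Matrix (Σ i, Fin (d i)) (Σ i, Fin (d i)) R,
      φ M = ((Q⁻¹ : (Matrix (Σ i, Fin (d i)) (Σ i, Fin (d i)) R)ˣ) :
          Matrix (Σ i, Fin (d i)) (Σ i, Fin (d i)) R) * M *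
        ((Q : (Matrix (Σ i, Fin (d i)) (Σ i, Fin (d i)) R)ˣ) :
          Matrix (Σ i, Fin (d i)) (Σ i, Fin (d i)) R) := fun M => rfl
  have hφA : φ A = Matrix.diagonal (fun p => lam p.1) := by
    rw [hφ_apply, hAQ]
    simp [mul_assoc]
  have hYnil : IsNilpotent (φ X) := hX.map (φ : Matrix (Σ i, Fin (d i)) (Σ i, Fin (d i)) R →+*
    Matrix (Σ i, Fin (d i)) (Σ i, Fin (d i)) R)
  have e1 : φ (Polynomial.aeval X g) = Polynomial.aeval (φ X) g :=
    (Polynomial.aeval_algHom_apply φ.toAlgHom X g).symm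
  have hYeq : φ X * Matrix.diagonal (fun p => lam p.1)
      - Matrix.diagonal (fun p => lam p.1) * φ X
      = (φ X) ^ α * Polynomial.aeval (φ X) g := by
    rw [← hφA, ← map_mul, ← map_mul, ← map_sub, h, map_mul, map_pow, e1]
  obtain ⟨Y, hYdef⟩ : ∃ Y, Y = φ X := ⟨_, rfl⟩
  rw [← hYdef] at hYnil hYeq
  have hα0 : Y ^ α = 0 := core lam (fun p => p.1) hreg α hα g hg Y hYnil hYeq
  apply φ.injective
  rw [map_pow, map_zero, ← hYdef, hα0]
end

section
/- Let $R$ be a commutative ring with unity and let $A \in M_n(R)$ be similar over $R$ to $\mathrm{diag}(\lambda_1, \dots, \lambda_n)$, where for every $i \neq j$ the element $\lambda_i - \lambda_j$ is not a zero-divisor in $R$. Let $B \in M_n(R)$. If $A$ commutes with the commutator $AB - BA$, then $AB = BA$. -/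
/-- Let `R` be a commutative ring and `A ∈ Mₙ(R)` similar over `R` to
`diag(λ₁, …, λₙ)` where each `λᵢ - λⱼ` (`i ≠ j`) is not a zero-divisor. If `A` commutes
with the commutator `AB - BA`, then `AB = BA`. -/
theorem stmt17 (R : Type*) [CommRing R] (n : ℕ)
    (lam : Fin n → R)
    (hreg : ∀ i j, i ≠ j → lam i - lam j ∈ nonZeroDivisors R)
    (A : Matrix (Fin n) (Fin n) R)
    (hA : ∃ Q : GL (Fin n) R,
      A = (Q : Matrix (Fin n) (Fin n) R) * Matrix.diagonal lam *
        ((Q⁻¹ : GL (Fin n) R) : Matrix (Fin n) (Fin n) R))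
    (B : Matrix (Fin n) (Fin n) R)
    (hcomm : A * (A * B - B * A) = (A * B - B * A) * A) :
    A * B = B * A := by
  obtain ⟨Q, hAeq⟩ := hA
  set Qm : Matrix (Fin n) (Fin n) R := (Q : Matrix (Fin n) (Fin n) R) with hQm
  set Qi : Matrix (Fin n) (Fin n) R := ((Q⁻¹ : GL (Fin n) R) : Matrix (Fin n) (Fin n) R) with hQi
  have hQQi : Qm * Qi = 1 := by
    rw [hQm, hQi, ← Units.val_mul, mul_inv_cancel, Units.val_one]
  have hQiQ : Qi * Qm = 1 := by
    rw [hQm, hQi, ← Units.val_mul, inv_mul_cancel, Units.val_one]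
  set D : Matrix (Fin n) (Fin n) R := Matrix.diagonal lam with hD
  set C : Matrix (Fin n) (Fin n) R := Qi * B * Qm with hC
  have conj : ∀ X Y : Matrix (Fin n) (Fin n) R,
      (Qm * X * Qi) * (Qm * Y * Qi) = Qm * (X * Y) * Qi := by
    intro X Y
    calc (Qm * X * Qi) * (Qm * Y * Qi) = Qm * X * (Qi * Qm) * Y * Qi := by noncomm_ring
    _ = Qm * (X * Y) * Qi := by rw [hQiQ]; noncomm_ring
  have unconj : ∀ X : Matrix (Fin n) (Fin n) R, Qi * (Qm * X * Qi) * Qm = X := by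
    intro X
    calc Qi * (Qm * X * Qi) * Qm = (Qi * Qm) * X * (Qi * Qm) := by noncomm_ring
    _ = X := by rw [hQiQ]; noncomm_ring
  have hB : B = Qm * C * Qi := by
    rw [hC]
    calc B = (Qm * Qi) * B * (Qm * Qi) := by rw [hQQi]; noncomm_ring
    _ = Qm * (Qi * B * Qm) * Qi := by noncomm_ring
  have hAB : A * B - B * A = Qm * (D * C - C * D) * Qi := by
    rw [hAeq, hB, conj, conj]
    noncomm_ring
  have hcomm' : D * (D * C - C * D) = (D * C - C * D) * D := by
    have hL : A * (A * B - B * A) = Qm * (D * (D * C - C * D)) * Qi := by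
      rw [hAB, hAeq, conj]
    have hR : (A * B - B * A) * A = Qm * ((D * C - C * D) * D) * Qi := by
      rw [hAB, hAeq, conj]
    have h := hcomm
    rw [hL, hR] at h
    have := congrArg (fun M => Qi * M * Qm) h
    simpa only [unconj] using this
  have hCoff : ∀ i j, i ≠ j → C i j = 0 := by
    intro i j hij
    have hE : (D * C - C * D) i j = (lam i - lam j) * C i j := by
      simp [hD, Matrix.sub_apply, Matrix.diagonal_mul, Matrix.mul_diagonal, sub_mul, mul_comm]
    have h0 : ((lam i - lam j) * C i j) * (lam i - lam j) = 0 := by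
      have h := congrFun (congrFun hcomm' i) j
      rw [show (D * (D * C - C * D)) i j = lam i * ((D * C - C * D) i j) by
            simp [hD, Matrix.diagonal_mul],
          show ((D * C - C * D) * D) i j = ((D * C - C * D) i j) * lam j by
            simp [hD, Matrix.mul_diagonal]] at h
      rw [hE] at h
      linear_combination h
    have hr := hreg i j hij
    have step1 : (lam i - lam j) * C i j = 0 := hr.2 _ h0
    exact hr.2 _ (by rw [mul_comm] at step1; exact step1)
  have hDC : D * C = C * D := by
    ext i j
    by_cases h : i = j
    · subst h
      simp [hD, Matrix.diagonal_mul, Matrix.mul_diagonal, mul_comm]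
    · simp [hD, Matrix.diagonal_mul, Matrix.mul_diagonal, hCoff i j h]
  have : A * B - B * A = 0 := by
    rw [hAB, hDC]
    simp
  linear_combination (norm := noncomm_ring) this
end

section
/- Let $R$ be a commutative ring with unity, $\alpha \geq 2$, and $g$ a polynomial with coefficients in $R$. Let $A \in M_n(R)$ and let $X \in M_n(R)$ be a nilpotent matrix satisfying $XA - AX = X^{\alpha} g(X)$. Then for every polynomial $u \in R[x]$ divisible by $x^m$ (i.e. of valuation at least $m$) and every integer $l \geq 0$, there exist polynomials $v_0, \dots, v_l \in R[x]$, each divisible by $x^m$, such that $u(X) A^l = \sum_{i=0}^{l} A^i v_i(X)$. -/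
open Polynomial

private lemma pow_lem19 {R : Type*} [CommRing R] {n : ℕ}
    (A X N : Matrix (Fin n) (Fin n) R) (hNX : Commute X N)
    (h : X * A = A * X + N) (k : ℕ) :
    X ^ (k + 1) * A = A * X ^ (k + 1) + (k + 1) • (X ^ k * N) := by
  induction k with
  | zero => simpa using h
  | succ k ih =>
    calc X ^ (k + 2) * A = X * (X ^ (k + 1) * A) := by rw [← mul_assoc, ← pow_succ']
      _ = X * (A * X ^ (k + 1)) + (k + 1) • (X * (X ^ k * N)) := by
          rw [ih, mul_add, mul_smul_comm]
      _ = (X * A) * X ^ (k + 1) + (k + 1) • (X ^ (k + 1) * N) := by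
          rw [← mul_assoc, ← mul_assoc, ← pow_succ']
      _ = A * X ^ (k + 2) + N * X ^ (k + 1) + (k + 1) • (X ^ (k + 1) * N) := by
          rw [h, add_mul, mul_assoc, ← pow_succ']
      _ = A * X ^ (k + 2) + (k + 1 + 1) • (X ^ (k + 1) * N) := by
          rw [add_assoc, ((hNX.symm.pow_right (k+1)).eq : N * X ^ (k+1) = X ^ (k+1) * N),
            succ_nsmul (X ^ (k + 1) * N) (k + 1)]
          abel

private lemma poly_lem19 {R : Type*} [CommRing R] {n : ℕ}
    (A X N : Matrix (Fin n) (Fin n) R) (hNX : Commute X N)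
    (h : X * A = A * X + N) (p : Polynomial R) :
    Polynomial.aeval X p * A = A * Polynomial.aeval X p +
      Polynomial.aeval X (Polynomial.derivative p) * N := by
  induction p using Polynomial.induction_on' with
  | add p q hp hq =>
    simp only [map_add, add_mul, mul_add]
    rw [hp, hq]; abel
  | monomial k a =>
    cases k with
    | zero => simp [Polynomial.aeval_monomial, Algebra.commutes]
    | succ k =>
      have hp := pow_lem19 A X N hNX h k
      rw [Polynomial.aeval_monomial, Polynomial.derivative_monomial,
        Polynomial.aeval_monomial]
      simp only [Nat.add_sub_cancel, Nat.cast_add, Nat.cast_one]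
      have e2 : ((k:ℕ)+1) • (X ^ k * N) = algebraMap R _ ((k:R)+1) * (X ^ k * N) := by
        rw [← Nat.cast_smul_eq_nsmul R, Algebra.smul_def]
        push_cast; ring_nf
      calc algebraMap R _ a * X ^ (k+1) * A
          = algebraMap R _ a * (X ^ (k+1) * A) := by rw [mul_assoc]
        _ = algebraMap R _ a * (A * X ^ (k+1)) + algebraMap R _ a * ((k+1) • (X ^ k * N)) := by
            rw [hp, mul_add]
        _ = A * (algebraMap R _ a * X ^ (k+1)) +
              algebraMap R _ (a * ((k:R) + 1)) * X ^ k * N := by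
            congr 1
            · rw [← mul_assoc, ← mul_assoc, Algebra.commutes]
            · simp only [map_mul, e2, mul_assoc]
private lemma dvd_lem19 {R : Type*} [CommRing R] (α : ℕ) (hα : 1 ≤ α) (g : Polynomial R)
    (m : ℕ) (u : Polynomial R) (hu : Polynomial.X ^ m ∣ u) :
    Polynomial.X ^ m ∣ Polynomial.derivative u * (Polynomial.X ^ α * g) := by
  obtain ⟨t, rfl⟩ := hu
  rw [Polynomial.derivative_mul, Polynomial.derivative_X_pow, add_mul]
  refine dvd_add ?_ ?_
  · refine dvd_trans (pow_dvd_pow (Polynomial.X : Polynomial R) (show m ≤ m - 1 + α by omega))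
      ⟨Polynomial.C (m : R) * t * g, ?_⟩
    rw [pow_add]; ring
  · exact ⟨Polynomial.derivative t * (Polynomial.X ^ α * g), by ring⟩

/-- Let `R` be a commutative ring, `α ≥ 2`, `g` a polynomial over `R`,
`A ∈ Mₙ(R)`, and `X ∈ Mₙ(R)` a nilpotent matrix with `XA - AX = Xᵅ g(X)`. Then for every
polynomial `u` divisible by `x^m` (valuation at least `m`) and every `l ≥ 0`, there are
polynomials `v₀, …, v_l`, each divisible by `x^m`, with `u(X) Aˡ = ∑ᵢ Aⁱ vᵢ(X)`. -/
theorem stmt19 (R : Type*) [CommRing R] (n α : ℕ) (hα : 2 ≤ α)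
    (g : Polynomial R)
    (A X : Matrix (Fin n) (Fin n) R) (hX : IsNilpotent X)
    (h : X * A - A * X = X ^ α * Polynomial.aeval X g)
    (m : ℕ) (u : Polynomial R) (hu : Polynomial.X ^ m ∣ u) (l : ℕ) :
    ∃ v : Fin (l + 1) → Polynomial R,
      (∀ i, Polynomial.X ^ m ∣ v i) ∧
      Polynomial.aeval X u * A ^ l =
        ∑ i : Fin (l + 1), A ^ (i : ℕ) * Polynomial.aeval X (v i) := by
  set N : Matrix (Fin n) (Fin n) R := X ^ α * Polynomial.aeval X g with hN
  have hcg : Commute X (Polynomial.aeval X g) := by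
    have := (Commute.all (Polynomial.X : Polynomial R) g).map (Polynomial.aeval X)
    simpa using this
  have hNX : Commute X N := ((Commute.refl X).pow_right α).mul_right hcg
  have hXA : X * A = A * X + N := by
    rw [sub_eq_iff_eq_add] at h; rw [h, add_comm]
  set D : Polynomial R → Polynomial R :=
    fun p => Polynomial.derivative p * (Polynomial.X ^ α * g) with hD
  have hDval : ∀ p : Polynomial R, Polynomial.aeval X (D p) =
      Polynomial.aeval X (Polynomial.derivative p) * N := by
    intro p
    simp [hD, hN, map_mul, mul_assoc]
  induction l with
  | zero =>
    exact ⟨fun _ => u, fun _ => hu, by simp⟩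
  | succ l ih =>
    obtain ⟨v, hv, hsum⟩ := ih
    refine ⟨fun j => (if hj : (j : ℕ) < l + 1 then D (v ⟨j, hj⟩) else 0) +
        (if hj : 0 < (j : ℕ) then v ⟨(j : ℕ) - 1, by have := j.isLt; omega⟩ else 0), ?_, ?_⟩
    · intro i
      refine dvd_add ?_ ?_
      · split
        · exact dvd_lem19 α (by omega) g m _ (hv _)
        · exact dvd_zero _
      · split
        · exact hv _
        · exact dvd_zero _
    · have step : Polynomial.aeval X u * A ^ (l + 1) =
          ∑ i : Fin (l + 1), (A ^ ((i : ℕ) + 1) * Polynomial.aeval X (v i)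
            + A ^ (i : ℕ) * Polynomial.aeval X (D (v i))) := by
        calc Polynomial.aeval X u * A ^ (l + 1)
            = (Polynomial.aeval X u * A ^ l) * A := by rw [mul_assoc, ← pow_succ]
          _ = (∑ i : Fin (l + 1), A ^ (i : ℕ) * Polynomial.aeval X (v i)) * A := by rw [hsum]
          _ = ∑ i : Fin (l + 1), A ^ (i : ℕ) * (Polynomial.aeval X (v i) * A) := by
              rw [Finset.sum_mul]; simp [mul_assoc]
          _ = _ := by
              refine Finset.sum_congr rfl fun i _ => ?_
              rw [poly_lem19 A X N hNX hXA (v i), mul_add, ← mul_assoc, ← pow_succ,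
                hDval (v i)]
      rw [step]
      rw [Finset.sum_add_distrib]
      have e1 : ∑ j : Fin (l + 2), A ^ (j : ℕ) *
          Polynomial.aeval X (if hj : (j : ℕ) < l + 1 then D (v ⟨j, hj⟩) else 0) =
          ∑ i : Fin (l + 1), A ^ (i : ℕ) * Polynomial.aeval X (D (v i)) := by
        rw [Fin.sum_univ_castSucc]
        simp only [Fin.coe_castSucc, Fin.val_last]
        rw [dif_neg (lt_irrefl (l + 1))]
        simp only [map_zero, mul_zero, add_zero]
        refine Finset.sum_congr rfl fun i _ => ?_
        rw [dif_pos i.isLt]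
      have e2 : ∑ j : Fin (l + 2), A ^ (j : ℕ) *
          Polynomial.aeval X (if hj : 0 < (j : ℕ)
            then v ⟨(j : ℕ) - 1, by have := j.isLt; omega⟩ else 0) =
          ∑ i : Fin (l + 1), A ^ ((i : ℕ) + 1) * Polynomial.aeval X (v i) := by
        rw [Fin.sum_univ_succ]
        simp only [Fin.val_zero, Fin.val_succ]
        simp only [lt_irrefl, ↓reduceDIte]
        simp only [map_zero, mul_zero, zero_add]
        refine Finset.sum_congr rfl fun i _ => ?_
        rw [dif_pos (Nat.succ_pos _)]
        simp
      simp only [map_add, mul_add, Finset.sum_add_distrib, e1, e2]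
      abel
end
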